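/- arXiv:2410.01743 — 3 statements merged into one kernel-verified Lean document; each statement's English description precedes it below -/
import Mathlib

section
/- Let J = (J_1,…,J_n) be a Grassmann necklace of type (k,n) with 1 ≤ k ≤ n−1, and for each i ∈ [n] write the elements of J_i as a_1^i <_i ⋯ <_i a_k^i. Then for every w ∈ S_n with w_n = n and cdes_L(w) = k, the following are equivalent: (i) cdes_L(w|_{[i, a_j^i]}) ≤ j−1 for all i ∈ [n] and j ∈ [k]; (ii) J_j ≤_j I_r(w) for all r, j ∈ [n]. -/
namespace PositroidPaper

variable {n : ℕ}

/-- The last element `n` of `[n] = {1,…,n}`, realized as the last element of `Fin n`. -/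
def lastF (n : ℕ) [NeZero n] : Fin n :=
  ⟨n - 1, by have := Nat.pos_of_ne_zero (NeZero.ne n); omega⟩

/-- The Gale order `S ≤ᵢ T` with respect to the `i`-order on `Fin n`
(the `i`-order is transported to the natural order on `Fin n` by `a ↦ a - i`). -/
def galeLE (i : Fin n) (S T : Finset (Fin n)) : Prop :=
  List.Forall₂ (· ≤ ·) ((S.image (fun a => a - i)).sort (· ≤ ·))
    ((T.image (fun a => a - i)).sort (· ≤ ·))

/-- A Grassmann necklace of type `(k,n)`. -/
def IsGrassmannNecklace (n k : ℕ) [NeZero n] (J : Fin n → Finset (Fin n)) : Prop :=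
  (∀ i, (J i).card = k) ∧
    ∀ i : Fin n,
      (i ∈ J i → ∃ j : Fin n, J (i + 1) = insert j ((J i).erase i)) ∧
      (i ∉ J i → J (i + 1) = J i)

/-- `B(J)`: the `k`-subsets `B` of `[n]` with `J_i ≤ᵢ B` for all `i`. -/
noncomputable def necklaceBases (n k : ℕ) (J : Fin n → Finset (Fin n)) :
    Finset (Finset (Fin n)) := by
  classical
  exact (Finset.powersetCard k (Finset.univ : Finset (Fin n))).filter
    (fun B => ∀ i, galeLE i (J i) B)

/-- The maximal minor of a `k × n` matrix on the column set `I` (taken in increasing order);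
junk value `0` if `I` does not have exactly `k` elements. -/
noncomputable def colMinor {k n : ℕ} (A : Matrix (Fin k) (Fin n) ℝ) (I : Finset (Fin n)) : ℝ :=
  if h : I.card = k then (A.submatrix id (fun j => ((I.orderIsoOfFin h) j : Fin n))).det else 0

/-- `Bs` is the set of bases of a rank-`k` positroid on `[n]`. -/
def IsPositroidBases (n k : ℕ) (Bs : Finset (Finset (Fin n))) : Prop :=
  ∃ A : Matrix (Fin k) (Fin n) ℝ, A.rank = k ∧
    (∀ I : Finset (Fin n), 0 ≤ colMinor A I) ∧
    ∀ I : Finset (Fin n), I ∈ Bs ↔ I.card = k ∧ colMinor A I ≠ 0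

/-- The 0/1 indicator vector `e_B ∈ ℝ^n` of `B ⊆ [n]`. -/
def indic (B : Finset (Fin n)) : Fin n → ℝ := fun a => if a ∈ B then 1 else 0

/-- The positroid polytope `P_J = conv{e_B : B ∈ B(J)}`. -/
def PJ (n k : ℕ) (J : Fin n → Finset (Fin n)) : Set (Fin n → ℝ) :=
  convexHull ℝ {x | ∃ B ∈ necklaceBases n k J, x = indic B}

/-- The `j`-th element (0-indexed) of `S` in the `i`-order. -/
noncomputable def nthGale [NeZero n] (i : Fin n) (S : Finset (Fin n)) (j : ℕ) : Fin n :=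
  ((S.image (fun a => a - i)).sort (· ≤ ·)).getD j 0 + i

/-- The (closed) cyclic interval `[i,j] ⊆ [n]`. -/
def cycInterval (i j : Fin n) : Finset (Fin n) :=
  Finset.univ.filter (fun a => a - i ≤ j - i)

/-- `x_{[i,j]} = x_i + x_{i+1} + ⋯ + x_{j-1}` (cyclically; the empty sum if `i = j`). -/
def cycSum (x : Fin n → ℝ) (i j : Fin n) : ℝ :=
  ∑ a ∈ Finset.univ.filter (fun a : Fin n => a - i < j - i), x a

/-- The set of cyclic left descents of the word `w|_S`, where `S ⊆ [n]` is totally ordered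
by the `i`-order: an element `a ∈ S` belongs to this set iff either `a` has a successor `b`
in `S` (w.r.t. the `i`-order) occurring to its left in `w`, or `a` is the maximum of `S`,
`S` has at least two elements, and the minimum of `S` occurs to the left of `a` in `w`. -/
noncomputable def cDesL (w : Equiv.Perm (Fin n)) (i : Fin n) (S : Finset (Fin n)) :
    Finset (Fin n) := by
  classical
  exact S.filter (fun a =>
    (∃ b ∈ S, a - i < b - i ∧ (∀ c ∈ S, a - i < c - i → b - i ≤ c - i) ∧ w⁻¹ b < w⁻¹ a) ∨
    ((∀ b ∈ S, b - i ≤ a - i) ∧ ∃ m ∈ S, m ≠ a ∧ (∀ b ∈ S, m - i ≤ b - i) ∧ w⁻¹ m < w⁻¹ a))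

/-- `cdes_L(w|_S)` where `S` is ordered by the `i`-order. -/
noncomputable def cdesL (w : Equiv.Perm (Fin n)) (i : Fin n) (S : Finset (Fin n)) : ℕ :=
  (cDesL w i S).card

/-- The cyclic rotation `w^{(r)}` of the word `w_1 ⋯ w_n` ending at the letter `r`. -/
def rotTo [NeZero n] (w : Equiv.Perm (Fin n)) (r : Fin n) : Equiv.Perm (Fin n) :=
  (Equiv.addRight (w⁻¹ r + 1)).trans w

/-- `I_r(w) = cDes_L(w^{(r)})`. -/
noncomputable def IrFinset [NeZero n] (w : Equiv.Perm (Fin n)) (r : Fin n) : Finset (Fin n) :=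
  cDesL (rotTo w r) 0 Finset.univ

/-- The vertex set `{e_{I_r(w)} : r ∈ [n]}` of the `(w)`-simplex. -/
def vertexSet [NeZero n] (w : Equiv.Perm (Fin n)) : Set (Fin n → ℝ) :=
  {x | ∃ r : Fin n, x = indic (IrFinset w r)}

/-- The `(w)`-simplex `Δ_(w) = conv{e_{I_1(w)},…,e_{I_n(w)}}`. -/
def simplexW [NeZero n] (w : Equiv.Perm (Fin n)) : Set (Fin n → ℝ) :=
  convexHull ℝ (vertexSet w)

/-- The set `D_J` of permutations labelling the circuit triangulation of `P_J`. -/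
noncomputable def DJ (n k : ℕ) [NeZero n] (J : Fin n → Finset (Fin n)) :
    Finset (Equiv.Perm (Fin n)) := by
  classical
  exact Finset.univ.filter (fun w =>
    w (lastF n) = lastF n ∧ cdesL w 0 Finset.univ = k ∧
      ∀ r j : Fin n, galeLE j (J j) (IrFinset w r))

/-- Connectedness of a matroid on `[n]` given by its set of bases: the ground set admits no
partition into nonempty `A`, `Aᶜ` such that every basis is a union of a basis of the
restriction to `A` and one of the restriction to `Aᶜ`, all such unions being bases. -/
def ConnectedBases (Bs : Finset (Finset (Fin n))) : Prop :=
  ¬ ∃ A : Finset (Fin n), A.Nonempty ∧ Aᶜ.Nonempty ∧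
      ∀ B₁ ∈ Bs, ∀ B₂ ∈ Bs, (B₁ ∩ A) ∪ (B₂ \ A) ∈ Bs

/-- `Δ_(u)` and `Δ_(w)` share a common facet. -/
def SharedFacet [NeZero n] (u w : Equiv.Perm (Fin n)) : Prop :=
  (vertexSet u ∩ vertexSet w).ncard = n - 1 ∧
    simplexW u ∩ simplexW w = convexHull ℝ (vertexSet u ∩ vertexSet w)

/-- The graph `Γ_J` of the circuit triangulation of `P_J`. -/
def gammaJ (n k : ℕ) [NeZero n] (J : Fin n → Finset (Fin n)) :
    SimpleGraph (Equiv.Perm (Fin n)) where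
  Adj u w := u ≠ w ∧ u ∈ DJ n k J ∧ w ∈ DJ n k J ∧ SharedFacet u w
  symm := by
    constructor
    rintro u w ⟨hne, hu, hw, hc, hi⟩
    refine ⟨hne.symm, hw, hu, ?_, ?_⟩
    · rwa [Set.inter_comm]
    · rw [Set.inter_comm (simplexW w) (simplexW u), Set.inter_comm (vertexSet w) (vertexSet u)]
      exact hi
  loopless := ⟨fun u h => h.1 rfl⟩

/-- Graph distance in `Γ_J`. -/
noncomputable def distJ (n k : ℕ) [NeZero n] (J : Fin n → Finset (Fin n))
    (u w : Equiv.Perm (Fin n)) : ℕ :=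
  (gammaJ n k J).dist u w

/-- The partial order `≺` on `D_J` determined by `w₀`. -/
def precJ (n k : ℕ) [NeZero n] (J : Fin n → Finset (Fin n))
    (w0 u v : Equiv.Perm (Fin n)) : Prop :=
  u ≠ v ∧ distJ n k J w0 u + distJ n k J u v = distJ n k J w0 v

/-- `cover(w)`: the number of elements of `D_J` covered by `w` in `(D_J, ≺)`. -/
noncomputable def coverNum (n k : ℕ) [NeZero n] (J : Fin n → Finset (Fin n))
    (w0 w : Equiv.Perm (Fin n)) : ℕ :=
  {u : Equiv.Perm (Fin n) | u ∈ DJ n k J ∧ precJ n k J w0 u w ∧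
    ¬ ∃ v ∈ DJ n k J, precJ n k J w0 u v ∧ precJ n k J w0 v w}.ncard

/-- The facet of `Δ_(w)` obtained by deleting the vertex `e_{I_r(w)}`. -/
def facetW [NeZero n] (w : Equiv.Perm (Fin n)) (r : Fin n) : Set (Fin n → ℝ) :=
  convexHull ℝ {x | ∃ r' : Fin n, r' ≠ r ∧ x = indic (IrFinset w r')}

/-- The Ehrhart counting function `L(X,t) = #(t·X ∩ ℤ^m)`. -/
noncomputable def Lcount {m : ℕ} (X : Set (Fin m → ℝ)) (t : ℕ) : ℕ :=
  ((fun x : Fin m → ℝ => (t : ℝ) • x) '' X ∩ {x | ∀ a, ∃ z : ℤ, x a = (z : ℝ)}).ncard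

/-- Projection `ℝ^n → ℝ^{n-1}` onto the first `n-1` coordinates. -/
def proj (n : ℕ) (x : Fin n → ℝ) : Fin (n - 1) → ℝ :=
  fun a => x (Fin.castLE (Nat.sub_le n 1) a)

/-- `F` is an upper facet of `Q ⊆ ℝ^m`. -/
def IsUpperFacet {m : ℕ} (Q F : Set (Fin m → ℝ)) : Prop :=
  ∃ a b : Fin m, a ≤ b ∧ ∃ c : ℤ,
    F = Q ∩ {x | ∑ t ∈ Finset.Icc a b, x t = (c : ℝ)} ∧
    Q ⊆ {x | ∑ t ∈ Finset.Icc a b, x t ≤ (c : ℝ)} ∧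
    Module.finrank ℝ (affineSpan ℝ F).direction = m - 1

/-- The half-open polytope: `Q` with all its upper facets removed. -/
def halfOpen {m : ℕ} (Q : Set (Fin m → ℝ)) : Set (Fin m → ℝ) :=
  Q \ ⋃₀ {F | IsUpperFacet Q F}

/-- The half-open simplex `∇°_w`. -/
def nablaO [NeZero n] (w : Equiv.Perm (Fin n)) : Set (Fin n → ℝ) :=
  {y | 0 < y (w 0) ∧ y (w (lastF n)) ≤ 1 ∧
    ∀ p : Fin n, p ≠ lastF n →
      (w p < w (p + 1) → y (w p) ≤ y (w (p + 1))) ∧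
      (w (p + 1) < w p → y (w p) < y (w (p + 1)))}

/-- `des(w) = #{i ∈ [n-1] : w_i > w_{i+1}}`. -/
noncomputable def desNum [NeZero n] (w : Equiv.Perm (Fin n)) : ℕ := by
  classical
  exact (Finset.univ.filter (fun p : Fin n => p ≠ lastF n ∧ w (p + 1) < w p)).card

/-- `F` is a facet of the polytope `P ⊆ ℝ^n`. -/
def IsFacetOf {n : ℕ} (P F : Set (Fin n → ℝ)) : Prop :=
  ∃ (u : Fin n → ℝ) (c : ℝ),
    F = P ∩ {x | ∑ a, u a * x a = c} ∧ P ⊆ {x | ∑ a, u a * x a ≤ c} ∧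
    Module.finrank ℝ (affineSpan ℝ F).direction + 1 =
      Module.finrank ℝ (affineSpan ℝ P).direction

set_option linter.unusedSectionVars false

section Aux
variable [NeZero n]

lemma fin_npos : 0 < n := Nat.pos_of_ne_zero (NeZero.ne n)

lemma sub_inj (i : Fin n) : Function.Injective (fun a : Fin n => a - i) :=
  sub_left_injective

lemma mem_cycInterval {i x a : Fin n} : a ∈ cycInterval i x ↔ a - i ≤ x - i := by
  simp [cycInterval]

lemma self_mem_cycInterval (i x : Fin n) : i ∈ cycInterval i x := by
  rw [mem_cycInterval, sub_self, Fin.le_def, Fin.val_zero]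
  exact Nat.zero_le _

lemma right_mem_cycInterval (i x : Fin n) : x ∈ cycInterval i x := mem_cycInterval.2 le_rfl

lemma sub_lt_sub_iff {i x a : Fin n} : a - i < x - i ↔ (a - i ≤ x - i ∧ a ≠ x) := by
  rw [lt_iff_le_and_ne]
  exact and_congr_right fun _ => (sub_left_injective (b := i)).ne_iff

/-- the successor function on the cyclic interval `[i,x]`. -/
def nxt (i x a : Fin n) : Fin n := if a = x then i else a + 1

lemma add_one_sub_val {i a : Fin n} (h : (a - i).val + 1 < n) :
    ((a + 1) - i).val = (a - i).val + 1 := by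
  have h1 : (a + 1) - i = (a - i) + 1 := add_sub_right_comm a 1 i
  have h2 : ((1 : Fin n)).val = 1 := by rw [Fin.val_one']; exact Nat.mod_eq_of_lt (by omega)
  rw [h1, Fin.add_def]
  simp only [h2]
  exact Nat.mod_eq_of_lt h

lemma nxt_mem {i x a : Fin n} (ha : a ∈ cycInterval i x) : nxt i x a ∈ cycInterval i x := by
  unfold nxt
  split_ifs with h
  · exact self_mem_cycInterval i x
  · have hlt : a - i < x - i := sub_lt_sub_iff.2 ⟨mem_cycInterval.1 ha, h⟩
    rw [Fin.lt_def] at hlt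
    have hx : (x - i).val < n := (x - i).isLt
    rw [mem_cycInterval, Fin.le_def, add_one_sub_val (by omega)]
    omega

lemma nxt_injOn {i x : Fin n} : Set.InjOn (nxt i x) (cycInterval i x) := by
  intro a ha b hb hab
  simp only [Finset.coe_sort_coe, Finset.mem_coe] at ha hb
  unfold nxt at hab
  split_ifs at hab with h1 h2 h2
  · rw [h1, h2]
  · -- a = x, i = b + 1
    exfalso
    have hlt : b - i < x - i := sub_lt_sub_iff.2 ⟨mem_cycInterval.1 hb, h2⟩
    have hz : (b - i) + 1 = 0 := by rw [hab]; abel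
    have := (b - i).isLt
    rw [Fin.lt_def] at hlt
    rcases Nat.lt_or_ge ((b - i).val + 1) n with hc | hc
    · have : ((b - i) + 1).val = (b - i).val + 1 := by
        rw [Fin.add_def]
        have h2' : ((1 : Fin n)).val = 1 := by
          rw [Fin.val_one']; exact Nat.mod_eq_of_lt (by omega)
        simp only [h2']
        exact Nat.mod_eq_of_lt hc
      rw [hz, Fin.val_zero] at this
      omega
    · have := (x - i).isLt
      omega
  · -- b = x, i = a + 1
    exfalso
    have hlt : a - i < x - i := sub_lt_sub_iff.2 ⟨mem_cycInterval.1 ha, h1⟩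
    have hz : (a - i) + 1 = 0 := by rw [← hab]; abel
    have := (a - i).isLt
    rw [Fin.lt_def] at hlt
    rcases Nat.lt_or_ge ((a - i).val + 1) n with hc | hc
    · have : ((a - i) + 1).val = (a - i).val + 1 := by
        rw [Fin.add_def]
        have h2' : ((1 : Fin n)).val = 1 := by
          rw [Fin.val_one']; exact Nat.mod_eq_of_lt (by omega)
        simp only [h2']
        exact Nat.mod_eq_of_lt hc
      rw [hz, Fin.val_zero] at this
      omega
    · have := (x - i).isLt
      omega
  · exact add_right_cancel hab

lemma image_nxt (i x : Fin n) : (cycInterval i x).image (nxt i x) = cycInterval i x := by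
  apply Finset.eq_of_subset_of_card_le
  · intro b hb
    obtain ⟨a, ha, rfl⟩ := Finset.mem_image.1 hb
    exact nxt_mem ha
  · rw [Finset.card_image_of_injOn nxt_injOn]

lemma sum_nxt (i x : Fin n) (f : Fin n → ℕ) :
    ∑ a ∈ cycInterval i x, f (nxt i x a) = ∑ a ∈ cycInterval i x, f a := by
  conv_rhs => rw [← image_nxt i x]
  exact (Finset.sum_image fun a ha b hb h => nxt_injOn ha hb h).symm

lemma key_val (y z c : Fin n) (hyz : y ≠ z) :
    (z - c).val + (y - z).val = (y - c).val + n * (if (z - c) < (y - c) then 0 else 1) := by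
  have h1 : (z - c) + (y - z) = y - c := by abel
  have hA : (y - c).val = ((z - c).val + (y - z).val) % n := by
    rw [← h1, Fin.add_def]
  have hC : (y - z).val ≠ 0 := by
    intro h0
    exact hyz (sub_eq_zero.1 (Fin.ext (by rw [h0, Fin.val_zero])))
  have hB := (z - c).isLt
  have hC2 := (y - z).isLt
  have hlt : (z - c) < (y - c) ↔ (z - c).val < (y - c).val := Fin.lt_def
  rcases Nat.lt_or_ge ((z - c).val + (y - z).val) n with h | h
  · rw [Nat.mod_eq_of_lt h] at hA
    rw [if_pos (hlt.2 (by omega))]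
    omega
  · rw [Nat.mod_eq_sub_mod h, Nat.mod_eq_of_lt (by omega)] at hA
    rw [if_neg (by rw [hlt]; omega)]
    omega

end Aux
section Aux2
variable [NeZero n]

/-- the number of descents of the word `w` restricted to the cyclic interval `[i,x]`,
read cyclically, w.r.t. the cut `c`. -/
def dcnt (w : Equiv.Perm (Fin n)) (i x c : Fin n) : ℕ :=
  ((cycInterval i x).filter (fun a => w⁻¹ (nxt i x a) - c < w⁻¹ a - c)).card

lemma ne_nxt {i x : Fin n} (hix : i ≠ x) {a : Fin n} (ha : a ∈ cycInterval i x) :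
    a ≠ nxt i x a := by
  have hn2 : 1 < n := by
    rcases Nat.lt_or_ge 1 n with h | h
    · exact h
    · exfalso
      have := fin_npos (n := n)
      interval_cases n
      exact hix (Subsingleton.elim i x)
  unfold nxt
  split_ifs with h
  · rw [h]; exact (Ne.symm hix)
  · intro hc
    have h1 : ((1 : Fin n)).val = 1 := by
      rw [Fin.val_one']; exact Nat.mod_eq_of_lt hn2
    have h4 := congrArg Fin.val hc
    rw [Fin.add_def, h1] at h4
    have hv : a.val = (a.val + 1) % n := h4
    have ha2 := a.isLt
    rcases Nat.lt_or_ge (a.val + 1) n with hlt | hge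
    · rw [Nat.mod_eq_of_lt hlt] at hv; omega
    · have h3 : a.val + 1 = n := by omega
      rw [h3, Nat.mod_self] at hv
      omega

lemma dcnt_negcard (w : Equiv.Perm (Fin n)) {i x : Fin n} (hix : i ≠ x) (d : Fin n) :
    (∑ a ∈ cycInterval i x, (w⁻¹ a - w⁻¹ (nxt i x a)).val)
      = n * ((cycInterval i x).filter
          (fun a => ¬ (w⁻¹ (nxt i x a) - d < w⁻¹ a - d))).card := by
  have hpt : ∀ a ∈ cycInterval i x,
      (w⁻¹ (nxt i x a) - d).val + (w⁻¹ a - w⁻¹ (nxt i x a)).val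
        = (w⁻¹ a - d).val
          + n * (if (w⁻¹ (nxt i x a) - d < w⁻¹ a - d) then 0 else 1) := by
    intro a ha
    exact key_val (w⁻¹ a) (w⁻¹ (nxt i x a)) d
      (fun h => ne_nxt hix ha (w⁻¹.injective h))
  have hsum := Finset.sum_congr rfl hpt
  rw [Finset.sum_add_distrib, Finset.sum_add_distrib,
    sum_nxt i x (fun a => (w⁻¹ a - d).val), ← Finset.mul_sum] at hsum
  have hite : (∑ a ∈ cycInterval i x,
      (if (w⁻¹ (nxt i x a) - d < w⁻¹ a - d) then (0:ℕ) else 1))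
      = ((cycInterval i x).filter
          (fun a => ¬ (w⁻¹ (nxt i x a) - d < w⁻¹ a - d))).card := by
    rw [Finset.sum_ite, Finset.sum_const, Finset.sum_const]
    simp
  rw [hite] at hsum
  omega

lemma dcnt_const (w : Equiv.Perm (Fin n)) {i x : Fin n} (hix : i ≠ x) (c c' : Fin n) :
    dcnt w i x c = dcnt w i x c' := by
  have h1 := dcnt_negcard w hix c
  have h2 := dcnt_negcard w hix c'
  have e1 := Finset.card_filter_add_card_filter_not
    (s := cycInterval i x) (fun a => w⁻¹ (nxt i x a) - c < w⁻¹ a - c)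
  have e2 := Finset.card_filter_add_card_filter_not
    (s := cycInterval i x) (fun a => w⁻¹ (nxt i x a) - c' < w⁻¹ a - c')
  have hn := fin_npos (n := n)
  have hAB := Nat.eq_of_mul_eq_mul_left hn (h1.symm.trans h2)
  unfold dcnt
  omega

end Aux2
section Aux3
variable [NeZero n]

lemma cDesL_cycInterval (w : Equiv.Perm (Fin n)) (i x : Fin n) :
    cDesL w i (cycInterval i x)
      = (cycInterval i x).filter (fun a => w⁻¹ (nxt i x a) < w⁻¹ a) := by
  unfold cDesL
  apply Finset.filter_congr
  intro a ha
  have hax := mem_cycInterval.1 ha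
  by_cases h : a = x
  · subst h
    have hnxt : nxt i a a = i := if_pos rfl
    rw [hnxt]
    constructor
    · rintro (⟨b, hb, hlt, -, -⟩ | ⟨-, m, hm, hma, hmin, hpos⟩)
      · exact absurd (mem_cycInterval.1 hb) (not_le_of_gt hlt)
      · have h0 : m - i ≤ i - i := hmin i (self_mem_cycInterval i a)
        rw [sub_self, Fin.le_def, Fin.val_zero] at h0
        have hm0 : m - i = 0 := by
          apply Fin.ext
          rw [Fin.val_zero]
          omega
        rw [sub_eq_zero.1 hm0] at hpos
        exact hpos
    · intro hpos
      right
      have hia : i ≠ a := by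
        intro h
        rw [h] at hpos
        exact lt_irrefl _ hpos
      refine ⟨fun b hb => mem_cycInterval.1 hb, i, self_mem_cycInterval i a, hia, ?_, hpos⟩
      intro b hb
      rw [sub_self, Fin.le_def, Fin.val_zero]
      exact Nat.zero_le _
  · have hnxt : nxt i x a = a + 1 := if_neg h
    rw [hnxt]
    have hltx : a - i < x - i := sub_lt_sub_iff.2 ⟨hax, h⟩
    have hxval := (x - i).isLt
    have hval : ((a + 1) - i).val = (a - i).val + 1 := by
      apply add_one_sub_val
      rw [Fin.lt_def] at hltx
      omega
    have ha1mem : a + 1 ∈ cycInterval i x := by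
      rw [mem_cycInterval, Fin.le_def, hval]
      rw [Fin.lt_def] at hltx
      omega
    have ha1lt : a - i < (a + 1) - i := by
      rw [Fin.lt_def, hval]
      omega
    constructor
    · rintro (⟨b, hb, hlt, hmin, hpos⟩ | ⟨hmax, -⟩)
      · have h1 : b - i ≤ (a + 1) - i := hmin (a + 1) ha1mem ha1lt
        have h2 : b = a + 1 := by
          apply sub_left_injective (b := i)
          apply Fin.ext
          rw [Fin.le_def, hval] at h1
          rw [Fin.lt_def] at hlt
          simp only [hval]
          omega
        rw [← h2]
        exact hpos
      · exact absurd (hmax x (right_mem_cycInterval i x)) (not_le_of_gt hltx)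
    · intro hpos
      left
      refine ⟨a + 1, ha1mem, ha1lt, ?_, hpos⟩
      intro c hc hlt
      rw [Fin.le_def, hval]
      rw [Fin.lt_def] at hlt
      omega

lemma univ_eq_cycInterval : (Finset.univ : Finset (Fin n)) = cycInterval 0 (lastF n) := by
  ext a
  simp only [Finset.mem_univ, true_iff, mem_cycInterval, sub_zero, Fin.le_def]
  have h1 := a.isLt
  have h2 : (lastF n).val = n - 1 := rfl
  omega

lemma nxt_zero_last (a : Fin n) : nxt 0 (lastF n) a = a + 1 := by
  unfold nxt
  split_ifs with h
  · have hv : ((lastF n) + 1 : Fin n).val = 0 := by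
      rw [Fin.add_def]
      show ((lastF n).val + (1 : Fin n).val) % n = 0
      rw [Fin.val_one']
      show ((n - 1) + 1 % n) % n = 0
      have hn := fin_npos (n := n)
      rcases Nat.lt_or_ge 1 n with hc | hc
      · rw [Nat.mod_eq_of_lt hc]
        have h3 : n - 1 + 1 = n := by omega
        rw [h3, Nat.mod_self]
      · have hn1 : n = 1 := by omega
        subst hn1
        rfl
    rw [h]
    exact (Fin.ext (by rw [hv, Fin.val_zero])).symm
  · rfl

lemma rotTo_inv (w : Equiv.Perm (Fin n)) (r b : Fin n) :
    (rotTo w r)⁻¹ b = w⁻¹ b - (w⁻¹ r + 1) := by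
  show (Equiv.addRight (w⁻¹ r + 1)).symm (w⁻¹ b) = w⁻¹ b - (w⁻¹ r + 1)
  rw [Equiv.symm_apply_eq]
  simp only [Equiv.coe_addRight]
  abel

lemma IrFinset_eq (w : Equiv.Perm (Fin n)) (r : Fin n) :
    IrFinset w r = Finset.univ.filter
      (fun a => w⁻¹ (a + 1) - (w⁻¹ r + 1) < w⁻¹ a - (w⁻¹ r + 1)) := by
  unfold IrFinset
  rw [univ_eq_cycInterval, cDesL_cycInterval]
  apply Finset.filter_congr
  intro a _
  rw [nxt_zero_last, rotTo_inv, rotTo_inv]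

end Aux3
section Aux4
variable [NeZero n]

lemma not_lt_zero' (a : Fin n) : ¬ a < (0 : Fin n) := by
  rw [Fin.lt_def, Fin.val_zero]
  exact Nat.not_lt_zero _

lemma cdesL_eq_dcnt0 (w : Equiv.Perm (Fin n)) (i x : Fin n) :
    cdesL w i (cycInterval i x) = dcnt w i x 0 := by
  unfold cdesL dcnt
  rw [cDesL_cycInterval]
  congr 1
  apply Finset.filter_congr
  intro a _
  rw [sub_zero, sub_zero]

lemma card_IrFinset (w : Equiv.Perm (Fin n)) (r : Fin n) (hn2 : 1 < n) :
    (IrFinset w r).card = cdesL w 0 Finset.univ := by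
  have h0l : (0 : Fin n) ≠ lastF n := by
    intro h
    have := congrArg Fin.val h
    rw [Fin.val_zero] at this
    have h2 : (lastF n).val = n - 1 := rfl
    omega
  have h1 : (IrFinset w r).card = dcnt w 0 (lastF n) (w⁻¹ r + 1) := by
    rw [IrFinset_eq]
    unfold dcnt
    rw [← univ_eq_cycInterval]
    congr 1
    apply Finset.filter_congr
    intro a _
    rw [nxt_zero_last]
  have h2 : cdesL w 0 Finset.univ = dcnt w 0 (lastF n) 0 := by
    rw [univ_eq_cycInterval, cdesL_eq_dcnt0]
  rw [h1, h2, dcnt_const w h0l]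

lemma dcnt_split (w : Equiv.Perm (Fin n)) {i x : Fin n} (hix : i ≠ x) (c : Fin n) :
    dcnt w i x c
      = ((Finset.univ.filter (fun a => w⁻¹ (a + 1) - c < w⁻¹ a - c)).filter
          (fun a => a - i < x - i)).card
        + (if w⁻¹ i - c < w⁻¹ x - c then 1 else 0) := by
  unfold dcnt
  have hx : x ∈ cycInterval i x := right_mem_cycInterval i x
  have hset : ((cycInterval i x).erase x).filter
      (fun a => w⁻¹ (nxt i x a) - c < w⁻¹ a - c)
      = (Finset.univ.filter (fun a => w⁻¹ (a + 1) - c < w⁻¹ a - c)).filter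
          (fun a => a - i < x - i) := by
    ext a
    simp only [Finset.mem_filter, Finset.mem_erase, Finset.mem_univ, true_and]
    constructor
    · rintro ⟨⟨hax, hmem⟩, hd⟩
      have hnxt : nxt i x a = a + 1 := if_neg hax
      rw [hnxt] at hd
      exact ⟨hd, sub_lt_sub_iff.2 ⟨mem_cycInterval.1 hmem, hax⟩⟩
    · rintro ⟨hd, hlt⟩
      obtain ⟨hle, hax⟩ := sub_lt_sub_iff.1 hlt
      have hnxt : nxt i x a = a + 1 := if_neg hax
      exact ⟨⟨hax, mem_cycInterval.2 hle⟩, by rw [hnxt]; exact hd⟩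
  rw [← Finset.insert_erase hx, Finset.filter_insert]
  have hnxtx : nxt i x x = i := if_pos rfl
  rw [hnxtx]
  split_ifs with h
  · rw [Finset.card_insert_of_notMem (fun hmem => by
      have := (Finset.mem_filter.1 hmem).1
      exact (Finset.notMem_erase x _) this), hset]
  · rw [hset, Nat.add_zero]

lemma B_le (w : Equiv.Perm (Fin n)) (i x r : Fin n) :
    ((IrFinset w r).filter (fun a => a - i < x - i)).card
      ≤ cdesL w i (cycInterval i x) := by
  by_cases hix : i = x
  · subst hix
    have : (IrFinset w r).filter (fun a => a - i < i - i) = ∅ := by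
      apply Finset.filter_false_of_mem
      intro a _
      rw [sub_self]
      exact not_lt_zero' _
    rw [this]
    simp
  · rw [cdesL_eq_dcnt0, dcnt_const w hix 0 (w⁻¹ r + 1), dcnt_split w hix,
      IrFinset_eq]
    split_ifs <;> omega

lemma B_ex (w : Equiv.Perm (Fin n)) (i x : Fin n) :
    ∃ r : Fin n, ((IrFinset w r).filter (fun a => a - i < x - i)).card
      = cdesL w i (cycInterval i x) := by
  by_cases hix : i = x
  · subst hix
    refine ⟨i, ?_⟩
    have h1 : (IrFinset w i).filter (fun a => a - i < i - i) = ∅ := by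
      apply Finset.filter_false_of_mem
      intro a _
      rw [sub_self]
      exact not_lt_zero' _
    have h2 : cdesL w i (cycInterval i i) = 0 := by
      rw [cdesL_eq_dcnt0]
      unfold dcnt
      rw [Finset.card_eq_zero]
      apply Finset.filter_false_of_mem
      intro a ha
      have hai : a = i := by
        have := mem_cycInterval.1 ha
        rw [sub_self] at this
        have h0 : a - i = 0 := by
          apply Fin.ext
          rw [Fin.val_zero]
          rw [Fin.le_def, Fin.val_zero] at this
          omega
        exact sub_eq_zero.1 h0
      subst hai
      simp [nxt]
    rw [h1, h2, Finset.card_empty]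
  · refine ⟨w (w⁻¹ x - 1), ?_⟩
    have hc : w⁻¹ (w (w⁻¹ x - 1)) + 1 = w⁻¹ x := by
      rw [show w⁻¹ (w (w⁻¹ x - 1)) = w⁻¹ x - 1 from w.symm_apply_apply _, sub_add_cancel]
    rw [cdesL_eq_dcnt0, dcnt_const w hix 0 (w⁻¹ (w (w⁻¹ x - 1)) + 1),
      dcnt_split w hix, IrFinset_eq]
    rw [if_neg]
    · omega
    · rw [hc, sub_self]
      exact not_lt_zero' _

end Aux4
section Aux5
variable [NeZero n]

lemma getD_eq_get (L : List (Fin n)) {t : ℕ} (h : t < L.length) :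
    L.getD t 0 = L.get ⟨t, h⟩ := by
  rw [List.getD_eq_getElem L 0 h, List.get_eq_getElem]

lemma counting_le {T : Finset (Fin n)} {v : Fin n} {t : ℕ} (ht : t < T.card)
    (hv : v ≤ (Finset.sort T (· ≤ ·)).getD t 0) :
    (T.filter (· < v)).card ≤ t := by
  classical
  set LT := Finset.sort T (· ≤ ·) with hLT
  have hlen : LT.length = T.card := Finset.length_sort _
  have htl : t < LT.length := by omega
  rw [getD_eq_get LT htl] at hv
  have hsorted : LT.SortedLT := Finset.sortedLT_sort T
  have hmono := hsorted.strictMono_get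
  have hle : (T.filter (· < v)).card ≤ (Finset.range t).card := by
    apply Finset.card_le_card_of_injOn (fun y => LT.idxOf y)
    · intro y hy
      rw [Finset.mem_coe, Finset.mem_filter] at hy
      have hyT : y ∈ LT := (Finset.mem_sort _).2 hy.1
      have hidx : LT.idxOf y < LT.length := List.idxOf_lt_length_iff.2 hyT
      rw [Finset.mem_coe, Finset.mem_range]
      by_contra hge
      push_neg at hge
      have h1 : LT.get ⟨t, htl⟩ ≤ LT.get ⟨LT.idxOf y, hidx⟩ :=
        hmono.monotone (Fin.mk_le_mk.2 hge)
      have h2 : LT.get ⟨LT.idxOf y, hidx⟩ = y := by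
        rw [List.get_eq_getElem]
        exact List.getElem_idxOf hidx
      rw [h2] at h1
      exact absurd hy.2 (not_lt_of_ge (le_trans hv h1))
    · intro y1 hy1 y2 hy2 heq
      simp only [Finset.coe_filter, Set.mem_setOf_eq] at hy1 hy2
      have hyT1 : y1 ∈ LT := (Finset.mem_sort _).2 hy1.1
      have hyT2 : y2 ∈ LT := (Finset.mem_sort _).2 hy2.1
      have hidx1 : LT.idxOf y1 < LT.length := List.idxOf_lt_length_iff.2 hyT1
      have hidx2 : LT.idxOf y2 < LT.length := List.idxOf_lt_length_iff.2 hyT2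
      rw [← List.getElem_idxOf hidx1, ← List.getElem_idxOf hidx2]
      simp only [heq]
  rwa [Finset.card_range] at hle

lemma le_nth_of_counting {T : Finset (Fin n)} {v : Fin n} {t : ℕ} (ht : t < T.card)
    (hc : (T.filter (· < v)).card ≤ t) :
    v ≤ (Finset.sort T (· ≤ ·)).getD t 0 := by
  classical
  by_contra hlt
  push_neg at hlt
  set LT := Finset.sort T (· ≤ ·) with hLT
  have hlen : LT.length = T.card := Finset.length_sort _
  have htl : t < LT.length := by omega
  rw [getD_eq_get LT htl] at hlt
  have hsorted : LT.SortedLT := Finset.sortedLT_sort T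
  have hmono := hsorted.strictMono_get
  have hsub : (Finset.range (t + 1)).image (fun j => LT.getD j 0) ⊆ T.filter (· < v) := by
    intro y hy
    obtain ⟨j, hj, rfl⟩ := Finset.mem_image.1 hy
    rw [Finset.mem_range] at hj
    have hjl : j < LT.length := by omega
    rw [getD_eq_get LT hjl, Finset.mem_filter]
    constructor
    · exact (Finset.mem_sort _).1 (LT.get_mem _)
    · calc LT.get ⟨j, hjl⟩ ≤ LT.get ⟨t, htl⟩ := hmono.monotone (Fin.mk_le_mk.2 (by omega))
        _ < v := hlt
  have hcard : ((Finset.range (t + 1)).image (fun j => LT.getD j 0)).card = t + 1 := by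
    rw [Finset.card_image_of_injOn, Finset.card_range]
    intro j1 hj1 j2 hj2 heq
    simp only [Finset.coe_range, Set.mem_Iio] at hj1 hj2
    have hl1 : j1 < LT.length := by omega
    have hl2 : j2 < LT.length := by omega
    have heq' : LT.get ⟨j1, hl1⟩ = LT.get ⟨j2, hl2⟩ := by
      rw [← getD_eq_get LT hl1, ← getD_eq_get LT hl2]
      exact heq
    exact congrArg Fin.val (hmono.injective heq')
  have := Finset.card_le_card hsub
  omega

lemma bridge (i : Fin n) (S T : Finset (Fin n)) {k : ℕ} (hS : S.card = k) (hT : T.card = k) :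
    galeLE i S T ↔ ∀ t, t < k →
      (T.filter (fun a => a - i < nthGale i S t - i)).card ≤ t := by
  classical
  set S' := S.image (fun a => a - i) with hS'
  set T' := T.image (fun a => a - i) with hT'
  have hcS : S'.card = k := by rw [hS', Finset.card_image_of_injective _ (sub_inj i), hS]
  have hcT : T'.card = k := by rw [hT', Finset.card_image_of_injective _ (sub_inj i), hT]
  have hlenS : (Finset.sort S' (· ≤ ·)).length = k := by rw [Finset.length_sort, hcS]
  have hlenT : (Finset.sort T' (· ≤ ·)).length = k := by rw [Finset.length_sort, hcT]
  have hnth : ∀ t : ℕ, nthGale i S t - i = (Finset.sort S' (· ≤ ·)).getD t 0 := by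
    intro t
    rw [nthGale]
    exact add_sub_cancel_right _ i
  have hfilter : ∀ v : Fin n,
      (T'.filter (· < v)).card = (T.filter (fun a => a - i < v)).card := by
    intro v
    rw [hT', Finset.filter_image, Finset.card_image_of_injective _ (sub_inj i)]
  unfold galeLE
  rw [← hS', ← hT', List.forall₂_iff_get]
  constructor
  · rintro ⟨-, hget⟩ t ht
    have hts : t < (Finset.sort S' (· ≤ ·)).length := by rw [hlenS]; exact ht
    have htt : t < (Finset.sort T' (· ≤ ·)).length := by rw [hlenT]; exact ht
    have htc : t < T'.card := by rw [hcT]; exact ht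
    rw [← hfilter _]
    apply counting_le htc
    rw [hnth t, getD_eq_get (Finset.sort S' (· ≤ ·)) hts,
      getD_eq_get (Finset.sort T' (· ≤ ·)) htt]
    exact hget t hts htt
  · intro h
    refine ⟨by rw [hlenS, hlenT], ?_⟩
    intro t h1 h2
    have ht : t < k := by rw [← hlenS]; exact h1
    have htc : t < T'.card := by rw [hcT]; exact ht
    have hv : ((Finset.sort S' (· ≤ ·)).get ⟨t, h1⟩) = nthGale i S t - i := by
      rw [hnth t, getD_eq_get _ h1]
    have hcnt : (T'.filter (· < (Finset.sort S' (· ≤ ·)).get ⟨t, h1⟩)).card ≤ t := by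
      rw [hfilter _, hv]
      exact h t ht
    have hle := le_nth_of_counting htc hcnt
    rwa [getD_eq_get _ h2] at hle

end Aux5

theorem DJ_two_characterizations
    (n k : ℕ) [NeZero n] (hk1 : 1 ≤ k) (hkn : k ≤ n - 1)
    (J : Fin n → Finset (Fin n)) (hJ : IsGrassmannNecklace n k J)
    (w : Equiv.Perm (Fin n)) (hw : w (lastF n) = lastF n)
    (hcd : cdesL w 0 Finset.univ = k) :
    (∀ i : Fin n, ∀ j : Fin k,
        cdesL w i (cycInterval i (nthGale i (J i) j.val)) ≤ j.val) ↔
      ∀ r j : Fin n, galeLE j (J j) (IrFinset w r) := by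
  have hn := fin_npos (n := n)
  have hn2 : 1 < n := by omega
  have hcardI : ∀ r, (IrFinset w r).card = k := fun r => by
    rw [card_IrFinset w r hn2, hcd]
  constructor
  · intro h r i
    rw [bridge i (J i) (IrFinset w r) (hJ.1 i) (hcardI r)]
    intro t ht
    calc ((IrFinset w r).filter (fun a => a - i < nthGale i (J i) t - i)).card
        ≤ cdesL w i (cycInterval i (nthGale i (J i) t)) := B_le w i _ r
      _ ≤ t := h i ⟨t, ht⟩
  · intro h i j
    obtain ⟨r, hr⟩ := B_ex w i (nthGale i (J i) j.val)
    rw [← hr]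
    exact (bridge i (J i) (IrFinset w r) (hJ.1 i) (hcardI r)).mp (h r i) j.val j.isLt


end PositroidPaper
end

section
/- Let n ≥ 1 and w ∈ S_n. Then the following identity holds in ℤ[[z]]: (1−z)^{n+1} · ∑_{t≥1} L(∇°_w, t) z^t = z^{des(w)+1}, where L(∇°_w, t) := |t·∇°_w ∩ ℤ^n| and des(w) := #{i ∈ [n−1] : w_i > w_{i+1}}. -/
namespace PositroidPaper

variable {n : ℕ}

section HstarProof

set_option linter.unusedSectionVars false

variable [NeZero n]

private lemma ne_lastF_iff {p : Fin n} : p ≠ lastF n ↔ (p : ℕ) < n - 1 := by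
  have hp := p.isLt
  constructor
  · intro h
    rcases Nat.lt_or_ge (p : ℕ) (n - 1) with h' | h'
    · exact h'
    · exact absurd (Fin.ext (by simp [lastF]; omega : (p : ℕ) = (lastF n : ℕ))) h
  · intro h heq
    rw [heq] at h
    simp [lastF] at h

private lemma val_add_one {p : Fin n} (hp : p ≠ lastF n) :
    ((p + 1 : Fin n) : ℕ) = (p : ℕ) + 1 := by
  have h := ne_lastF_iff.mp hp
  have hp2 := p.isLt
  have hn : 2 ≤ n := by omega
  have h1 : ((1 : Fin n) : ℕ) = 1 := by
    rw [Fin.val_one']; exact Nat.mod_eq_of_lt hn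
  rw [Fin.val_add, h1, Nat.mod_eq_of_lt (by omega)]

private lemma lt_add_one' {p : Fin n} (hp : p ≠ lastF n) : p < p + 1 := by
  rw [Fin.lt_def, val_add_one hp]; omega

private lemma apply_ne {w : Equiv.Perm (Fin n)} {p : Fin n} (hp : p ≠ lastF n) :
    w p ≠ w (p + 1) := by
  intro h
  have h2 := congrArg Fin.val (w.injective h)
  rw [val_add_one hp] at h2
  omega

private lemma strictMono_of_step {c : Fin n → ℤ}
    (h : ∀ p : Fin n, p ≠ lastF n → c p < c (p + 1)) : StrictMono c := by
  suffices H : ∀ k : ℕ, ∀ p q : Fin n, (q : ℕ) = (p : ℕ) + k + 1 → c p < c q by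
    intro p q hpq
    exact H ((q : ℕ) - (p : ℕ) - 1) p q (by rw [Fin.lt_def] at hpq; omega)
  intro k
  induction k with
  | zero =>
    intro p q hq
    have hp : p ≠ lastF n := ne_lastF_iff.mpr (by have := q.isLt; omega)
    have : q = p + 1 := by rw [Fin.ext_iff, val_add_one hp]; omega
    rw [this]; exact h p hp
  | succ k ih =>
    intro p q hq
    have hp : p ≠ lastF n := ne_lastF_iff.mpr (by have := q.isLt; omega)
    exact (h p hp).trans (ih (p + 1) q (by rw [val_add_one hp]; omega))

private def ascCount (w : Equiv.Perm (Fin n)) (k : ℕ) : ℕ :=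
  (Finset.univ.filter (fun q : Fin n => (q : ℕ) < k ∧ w q < w (q + 1))).card

private lemma ascCount_zero (w : Equiv.Perm (Fin n)) : ascCount w 0 = 0 := by
  simp [ascCount]

private lemma ascCount_succ (w : Equiv.Perm (Fin n)) {p : Fin n} (hp : p ≠ lastF n) :
    ascCount w ((p : ℕ) + 1) = ascCount w (p : ℕ) + (if w p < w (p + 1) then 1 else 0) := by
  classical
  unfold ascCount
  have hset : Finset.univ.filter (fun q : Fin n => (q : ℕ) < (p : ℕ) + 1 ∧ w q < w (q + 1))
      = Finset.univ.filter (fun q : Fin n =>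
          ((q : ℕ) < (p : ℕ) ∧ w q < w (q + 1)) ∨ (q = p ∧ w q < w (q + 1))) := by
    apply Finset.filter_congr
    intro q _
    constructor
    · rintro ⟨h1, h2⟩
      rcases Nat.lt_or_ge (q : ℕ) (p : ℕ) with h | h
      · exact Or.inl ⟨h, h2⟩
      · exact Or.inr ⟨Fin.ext (by omega), h2⟩
    · rintro (⟨h1, h2⟩ | ⟨rfl, h2⟩)
      · exact ⟨by omega, h2⟩
      · exact ⟨by omega, h2⟩
  rw [hset, Finset.filter_or, Finset.card_union_of_disjoint]
  · congr 1
    by_cases ha : w p < w (p + 1)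
    · rw [if_pos ha]
      have hsingle : Finset.univ.filter (fun q : Fin n => q = p ∧ w q < w (q + 1)) = {p} := by
        ext q
        simp only [Finset.mem_filter, Finset.mem_univ, true_and, Finset.mem_singleton]
        constructor
        · rintro ⟨rfl, _⟩; rfl
        · rintro rfl; exact ⟨rfl, ha⟩
      rw [hsingle, Finset.card_singleton]
    · rw [if_neg ha]
      have hempty : Finset.univ.filter (fun q : Fin n => q = p ∧ w q < w (q + 1)) = ∅ := by
        ext q
        simp only [Finset.mem_filter, Finset.mem_univ, true_and, Finset.notMem_empty,
          iff_false]
        rintro ⟨rfl, h⟩; exact ha h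
      rw [hempty, Finset.card_empty]
  · rw [Finset.disjoint_left]
    rintro q hq hq'
    simp only [Finset.mem_filter, Finset.mem_univ, true_and] at hq hq'
    obtain ⟨h1, -⟩ := hq
    obtain ⟨rfl, -⟩ := hq'
    omega

private lemma ascCount_last (w : Equiv.Perm (Fin n)) :
    ascCount w (n - 1) + desNum w = n - 1 := by
  classical
  have hdes : desNum w
      = (Finset.univ.filter (fun q : Fin n => (q : ℕ) < n - 1 ∧ w (q + 1) < w q)).card := by
    unfold desNum
    congr 1
    apply Finset.filter_congr
    intro q _
    rw [ne_lastF_iff]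
  have hdisj : Disjoint
      (Finset.univ.filter (fun q : Fin n => (q : ℕ) < n - 1 ∧ w q < w (q + 1)))
      (Finset.univ.filter (fun q : Fin n => (q : ℕ) < n - 1 ∧ w (q + 1) < w q)) := by
    rw [Finset.disjoint_left]
    rintro q hq hq'
    simp only [Finset.mem_filter, Finset.mem_univ, true_and] at hq hq'
    exact absurd hq'.2 (asymm hq.2)
  have hunion : (Finset.univ.filter (fun q : Fin n => (q : ℕ) < n - 1 ∧ w q < w (q + 1)))
      ∪ (Finset.univ.filter (fun q : Fin n => (q : ℕ) < n - 1 ∧ w (q + 1) < w q))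
      = Finset.univ.filter (fun q : Fin n => (q : ℕ) < n - 1) := by
    rw [← Finset.filter_or]
    apply Finset.filter_congr
    intro q _
    constructor
    · rintro (⟨h, -⟩ | ⟨h, -⟩) <;> exact h
    · intro h
      rcases lt_or_gt_of_ne (apply_ne (w := w) (ne_lastF_iff.mpr h)) with h' | h'
      · exact Or.inl ⟨h, h'⟩
      · exact Or.inr ⟨h, h'⟩
  have hcard : (Finset.univ.filter (fun q : Fin n => (q : ℕ) < n - 1)).card = n - 1 := by
    have : Finset.univ.filter (fun q : Fin n => (q : ℕ) < n - 1)
        = Finset.univ.erase (lastF n) := by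
      ext q
      simp only [Finset.mem_filter, Finset.mem_univ, true_and, Finset.mem_erase, and_true]
      rw [← ne_lastF_iff]
    rw [this, Finset.card_erase_of_mem (Finset.mem_univ _), Finset.card_univ, Fintype.card_fin]
  rw [ascCount, hdes, ← Finset.card_union_of_disjoint hdisj, hunion, hcard]

private lemma desNum_le (w : Equiv.Perm (Fin n)) : desNum w ≤ n - 1 := by
  have := ascCount_last w; omega

private def toReal (w : Equiv.Perm (Fin n)) (b : Fin n → ℤ) : Fin n → ℝ :=
  fun a => (b (w⁻¹ a) : ℝ)

private def Pred (w : Equiv.Perm (Fin n)) (t : ℕ) (b : Fin n → ℤ) : Prop :=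
  1 ≤ b 0 ∧ b (lastF n) ≤ (t : ℤ) ∧ ∀ p : Fin n, p ≠ lastF n →
    (w p < w (p + 1) → b p ≤ b (p + 1)) ∧ (w (p + 1) < w p → b p < b (p + 1))

private lemma toReal_injective (w : Equiv.Perm (Fin n)) : Function.Injective (toReal w) := by
  intro b b' h
  funext p
  have h2 := congrFun h (w p)
  simp only [toReal, Equiv.Perm.inv_def, Equiv.symm_apply_apply] at h2
  exact_mod_cast h2

private lemma scaled_eq (w : Equiv.Perm (Fin n)) {t : ℕ} (ht : 1 ≤ t) :
    (fun x : Fin n → ℝ => (t : ℝ) • x) '' nablaO w ∩ {x | ∀ a, ∃ z : ℤ, x a = (z : ℝ)}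
      = toReal w '' {b | Pred w t b} := by
  have htR : (0 : ℝ) < t := by exact_mod_cast Nat.lt_of_lt_of_le Nat.zero_lt_one ht
  ext x
  constructor
  · rintro ⟨⟨y, hy, rfl⟩, hx⟩
    choose z hz using hx
    simp only [Pi.smul_apply, smul_eq_mul] at hz
    obtain ⟨h0, h1, hsteps⟩ := hy
    refine ⟨fun p => z (w p), ⟨?_, ?_, ?_⟩, ?_⟩
    · show (1 : ℤ) ≤ z (w 0)
      have hpos : (0 : ℝ) < (t : ℝ) * y (w 0) := mul_pos htR h0
      rw [hz (w 0)] at hpos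
      have : (0 : ℤ) < z (w 0) := by exact_mod_cast hpos
      omega
    · show (z (w (lastF n)) : ℤ) ≤ (t : ℤ)
      have hle : (t : ℝ) * y (w (lastF n)) ≤ (t : ℝ) :=
        calc (t : ℝ) * y (w (lastF n)) ≤ (t : ℝ) * 1 :=
              mul_le_mul_of_nonneg_left h1 htR.le
          _ = t := mul_one _
      rw [hz _] at hle
      exact_mod_cast hle
    · intro p hp
      obtain ⟨ha, hd⟩ := hsteps p hp
      constructor
      · intro hlt
        show z (w p) ≤ z (w (p + 1))
        have h2 : (t : ℝ) * y (w p) ≤ (t : ℝ) * y (w (p + 1)) :=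
          mul_le_mul_of_nonneg_left (ha hlt) htR.le
        rw [hz _, hz _] at h2
        exact_mod_cast h2
      · intro hlt
        show z (w p) < z (w (p + 1))
        have h2 : (t : ℝ) * y (w p) < (t : ℝ) * y (w (p + 1)) :=
          mul_lt_mul_of_pos_left (hd hlt) htR
        rw [hz _, hz _] at h2
        exact_mod_cast h2
    · funext a
      show ((z (w (w⁻¹ a)) : ℤ) : ℝ) = (t : ℝ) * y a
      rw [Equiv.Perm.inv_def, Equiv.apply_symm_apply]
      exact (hz a).symm
  · rintro ⟨b, hb, rfl⟩
    obtain ⟨h0, h1, hsteps⟩ := hb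
    refine ⟨⟨fun a => (b (w⁻¹ a) : ℝ) / t, ⟨?_, ?_, ?_⟩, ?_⟩, fun a => ⟨b (w⁻¹ a), rfl⟩⟩
    · simp only [Equiv.Perm.inv_def, Equiv.symm_apply_apply]
      apply div_pos _ htR
      exact_mod_cast Int.lt_of_lt_of_le Int.zero_lt_one h0
    · simp only [Equiv.Perm.inv_def, Equiv.symm_apply_apply]
      rw [div_le_one htR]
      exact_mod_cast h1
    · intro p hp
      obtain ⟨ha, hd⟩ := hsteps p hp
      simp only [Equiv.Perm.inv_def, Equiv.symm_apply_apply]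
      constructor
      · intro h
        gcongr
        exact_mod_cast ha h
      · intro h
        gcongr
        exact_mod_cast hd h
    · funext a
      simp only [Pi.smul_apply, smul_eq_mul, toReal]
      field_simp

private def addAsc (w : Equiv.Perm (Fin n)) (b : Fin n → ℤ) : Fin n → ℤ :=
  fun p => b p + (ascCount w (p : ℕ) : ℤ)

private lemma addAsc_injective (w : Equiv.Perm (Fin n)) : Function.Injective (addAsc w) := by
  intro b b' h
  funext p
  have h2 := congrFun h p
  simp only [addAsc] at h2
  omega

private lemma bij2 (w : Equiv.Perm (Fin n)) (t : ℕ) :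
    Set.BijOn (addAsc w) {b | Pred w t b}
      {c : Fin n → ℤ | StrictMono c ∧ 1 ≤ c 0 ∧
        c (lastF n) ≤ (t : ℤ) + ((n - 1 - desNum w : ℕ) : ℤ)} := by
  have hAl : ascCount w ((lastF n : Fin n) : ℕ) = n - 1 - desNum w := by
    have h1 := ascCount_last w
    have h2 : ((lastF n : Fin n) : ℕ) = n - 1 := rfl
    rw [h2]; omega
  have hA0 : ascCount w ((0 : Fin n) : ℕ) = 0 := by
    rw [Fin.val_zero, ascCount_zero]
  refine ⟨?_, fun b _ b' _ h => addAsc_injective w h, ?_⟩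
  · rintro b ⟨h0, h1, hsteps⟩
    refine ⟨?_, ?_, ?_⟩
    · apply strictMono_of_step
      intro p hp
      have hA := ascCount_succ w hp
      have hval := val_add_one hp
      simp only [addAsc, hval, hA]
      rcases lt_or_gt_of_ne (apply_ne (w := w) hp) with h | h
      · have := (hsteps p hp).1 h
        rw [if_pos h]
        push_cast
        omega
      · have := (hsteps p hp).2 h
        rw [if_neg (asymm h)]
        push_cast
        omega
    · simp only [addAsc, hA0]
      omega
    · simp only [addAsc, hAl]
      omega
  · rintro c ⟨hmono, h0, h1⟩
    refine ⟨fun p => c p - (ascCount w (p : ℕ) : ℤ), ⟨?_, ?_, ?_⟩, ?_⟩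
    · simp only [hA0]
      omega
    · simp only [hAl] at h1 ⊢
      omega
    · intro p hp
      have hlt : c p < c (p + 1) := hmono (lt_add_one' hp)
      have hA := ascCount_succ w hp
      have hval := val_add_one hp
      simp only [hval, hA]
      constructor
      · intro h
        rw [if_pos h]
        push_cast
        omega
      · intro h
        rw [if_neg (asymm h)]
        push_cast
        omega
    · funext p
      simp only [addAsc]
      ring

private lemma bij3 (M : ℤ) :
    Set.BijOn (fun c : Fin n → ℤ => Finset.image c Finset.univ)
      {c : Fin n → ℤ | StrictMono c ∧ 1 ≤ c 0 ∧ c (lastF n) ≤ M}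
      ↑(Finset.powersetCard n (Finset.Icc (1 : ℤ) M)) := by
  classical
  refine ⟨?_, ?_, ?_⟩
  · rintro c ⟨hmono, h0, h1⟩
    rw [Finset.mem_coe, Finset.mem_powersetCard]
    constructor
    · intro x hx
      obtain ⟨p, -, rfl⟩ := Finset.mem_image.mp hx
      rw [Finset.mem_Icc]
      have hle0 : (0 : Fin n) ≤ p := by
        rw [Fin.le_def, Fin.val_zero]; omega
      have hlel : p ≤ lastF n := by
        rw [Fin.le_def]
        have := p.isLt
        simp only [lastF]
        omega
      exact ⟨h0.trans (hmono.monotone hle0), (hmono.monotone hlel).trans h1⟩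
    · rw [Finset.card_image_of_injective _ hmono.injective, Finset.card_univ, Fintype.card_fin]
  · rintro c ⟨hmono, -, -⟩ c' ⟨hmono', -, -⟩ h
    simp only at h
    have hcard : (Finset.image c Finset.univ).card = n := by
      rw [Finset.card_image_of_injective _ hmono.injective, Finset.card_univ, Fintype.card_fin]
    have hcard' : (Finset.image c Finset.univ).card = n := hcard
    have e1 := Finset.orderEmbOfFin_unique hcard
      (fun x => Finset.mem_image_of_mem c (Finset.mem_univ x)) hmono
    have e2 := Finset.orderEmbOfFin_unique hcard'
      (fun x => h ▸ Finset.mem_image_of_mem c' (Finset.mem_univ x)) hmono'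
    exact e1.trans e2.symm
  · intro s hs
    rw [Finset.mem_coe, Finset.mem_powersetCard] at hs
    obtain ⟨hsub, hcard⟩ := hs
    refine ⟨⇑(s.orderEmbOfFin hcard), ⟨(s.orderEmbOfFin hcard).strictMono, ?_, ?_⟩, ?_⟩
    · have := hsub (Finset.orderEmbOfFin_mem s hcard 0)
      rw [Finset.mem_Icc] at this
      exact this.1
    · have := hsub (Finset.orderEmbOfFin_mem s hcard (lastF n))
      rw [Finset.mem_Icc] at this
      exact this.2
    · show Finset.image _ Finset.univ = s
      apply Finset.eq_of_subset_of_card_le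
      · intro x hx
        obtain ⟨p, -, rfl⟩ := Finset.mem_image.mp hx
        exact Finset.orderEmbOfFin_mem s hcard p
      · rw [Finset.card_image_of_injective _ (s.orderEmbOfFin hcard).injective,
          Finset.card_univ, Fintype.card_fin, hcard]

private lemma Lcount_nablaO (w : Equiv.Perm (Fin n)) {t : ℕ} (ht : 1 ≤ t) :
    Lcount (nablaO w) t = (t + (n - 1 - desNum w)).choose n := by
  classical
  set M : ℤ := (t : ℤ) + ((n - 1 - desNum w : ℕ) : ℤ) with hM
  unfold Lcount
  rw [scaled_eq w ht, Set.ncard_image_of_injective _ (toReal_injective w)]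
  calc ({b | Pred w t b} : Set (Fin n → ℤ)).ncard
      = (addAsc w '' {b | Pred w t b}).ncard :=
        (Set.ncard_image_of_injective _ (addAsc_injective w)).symm
    _ = ({c : Fin n → ℤ | StrictMono c ∧ 1 ≤ c 0 ∧ c (lastF n) ≤ M}).ncard := by
        rw [(bij2 w t).image_eq]
    _ = ((fun c : Fin n → ℤ => Finset.image c Finset.univ) ''
          {c : Fin n → ℤ | StrictMono c ∧ 1 ≤ c 0 ∧ c (lastF n) ≤ M}).ncard :=
        (Set.ncard_image_of_injOn (bij3 M).injOn).symm
    _ = (↑(Finset.powersetCard n (Finset.Icc (1 : ℤ) M)) : Set (Finset ℤ)).ncard := by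
        rw [(bij3 M).image_eq]
    _ = (Finset.powersetCard n (Finset.Icc (1 : ℤ) M)).card := Set.ncard_coe_finset _
    _ = (Finset.Icc (1 : ℤ) M).card.choose n := Finset.card_powersetCard _ _
    _ = (t + (n - 1 - desNum w)).choose n := by
        rw [Int.card_Icc]
        congr 1
        omega

theorem hstar_of_half_open_simplex
    (n : ℕ) [NeZero n] (w : Equiv.Perm (Fin n)) :
    (1 - PowerSeries.X : PowerSeries ℤ) ^ (n + 1) *
        PowerSeries.mk (fun t => if t = 0 then 0 else (Lcount (nablaO w) t : ℤ)) =
      (PowerSeries.X : PowerSeries ℤ) ^ (desNum w + 1) := by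
  classical
  have hdn : desNum w ≤ n - 1 := desNum_le w
  have hn : 1 ≤ n := Nat.pos_of_ne_zero (NeZero.ne n)
  have hmk : (PowerSeries.mk (fun t => if t = 0 then 0 else (Lcount (nablaO w) t : ℤ))
        : PowerSeries ℤ)
      = (PowerSeries.mk fun s => ((n + s).choose n : ℤ)) * PowerSeries.X ^ (desNum w + 1) := by
    ext t
    rw [PowerSeries.coeff_mk, PowerSeries.coeff_mul_X_pow']
    by_cases ht0 : t = 0
    · subst ht0
      rw [if_pos rfl, if_neg (by omega)]
    · rw [if_neg ht0, Lcount_nablaO w (Nat.one_le_iff_ne_zero.mpr ht0)]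
      by_cases hdt : desNum w + 1 ≤ t
      · rw [if_pos hdt, PowerSeries.coeff_mk]
        norm_cast
        congr 1
        omega
      · rw [if_neg hdt, Nat.choose_eq_zero_of_lt (by omega)]
        norm_cast
  have key : (PowerSeries.mk fun s => ((n + s).choose n : ℤ)) *
      ((1 - PowerSeries.X : PowerSeries ℤ) ^ (n + 1)) = 1 :=
    PowerSeries.mk_add_choose_mul_one_sub_pow_eq_one ℤ n
  rw [hmk,
    show (1 - PowerSeries.X : PowerSeries ℤ) ^ (n + 1) *
        ((PowerSeries.mk fun s => ((n + s).choose n : ℤ)) * PowerSeries.X ^ (desNum w + 1))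
      = ((PowerSeries.mk fun s => ((n + s).choose n : ℤ)) *
          ((1 - PowerSeries.X : PowerSeries ℤ) ^ (n + 1))) * PowerSeries.X ^ (desNum w + 1)
      from by ring,
    key, one_mul]

end HstarProof

end PositroidPaper
end

section
/- Let J be a Grassmann necklace of type (k,n) with n ≥ 2 and 1 ≤ k ≤ n−1 such that the matroid M(J) with bases B(J) is connected. Then the affine span of the positroid polytope P_J := conv{e_B : B ∈ B(J)} ⊆ ℝ^n has dimension n−1. -/
namespace PositroidPaper

variable {n : ℕ}

open Finset
open scoped Fin.NatCast Fin.CommRing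

/- ## Sorted lists vs counting -/

lemma countP_le_of_forall₂ {α : Type*} [LinearOrder α] {lA lB : List α}
    (h : List.Forall₂ (· ≤ ·) lA lB) (t : α) :
    lB.countP (fun a => decide (a ≤ t)) ≤ lA.countP (fun a => decide (a ≤ t)) := by
  induction h with
  | nil => simp
  | @cons a b lA' lB' hab htl ih =>
      simp only [List.countP_cons, decide_eq_true_eq]
      have : (if b ≤ t then 1 else 0) ≤ if a ≤ t then 1 else 0 := by
        split_ifs with h1 h2
        · exact le_refl _
        · exact absurd (le_trans hab h1) h2
        · omega
        · omega
      omega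

lemma forall₂_of_countP {α : Type*} [LinearOrder α] :
    ∀ (lA lB : List α), lA.Pairwise (· ≤ ·) → lB.Pairwise (· ≤ ·) → lA.length = lB.length →
    (∀ t, lB.countP (fun a => decide (a ≤ t)) ≤ lA.countP (fun a => decide (a ≤ t))) →
    List.Forall₂ (· ≤ ·) lA lB := by
  intro lA
  induction lA with
  | nil =>
      intro lB _ _ hlen _
      cases lB with
      | nil => exact List.Forall₂.nil
      | cons b lB' => simp at hlen
  | cons a lA' ih =>
      intro lB hsA hsB hlen hcnt
      cases lB with
      | nil => simp at hlen
      | cons b lB' =>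
          have hsA' := List.pairwise_cons.mp hsA
          have hsB' := List.pairwise_cons.mp hsB
          have hab : a ≤ b := by
            have h1 : 0 < (b :: lB').countP (fun a => decide (a ≤ b)) := by
              simp [List.countP_cons]
            have h2 : 0 < (a :: lA').countP (fun a => decide (a ≤ b)) :=
              lt_of_lt_of_le h1 (hcnt b)
            obtain ⟨c, hc, hcb⟩ := List.countP_pos_iff.mp h2
            simp only [decide_eq_true_eq] at hcb
            rcases List.mem_cons.mp hc with rfl | hc'
            · exact hcb
            · exact le_trans (hsA'.1 c hc') hcb
          refine List.Forall₂.cons hab (ih lB' hsA'.2 hsB'.2 (by simpa using hlen) ?_)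
          intro t
          by_cases hbt : b ≤ t
          · have hat : a ≤ t := le_trans hab hbt
            have := hcnt t
            simp only [List.countP_cons, decide_eq_true_eq, if_pos hbt, if_pos hat] at this
            omega
          · have : lB'.countP (fun a => decide (a ≤ t)) = 0 := by
              rw [List.countP_eq_zero]
              intro c hc
              simp only [decide_eq_true_eq]
              intro hct
              exact hbt (le_trans (hsB'.1 c hc) hct)
            omega

lemma countP_sort_eq {α : Type*} [LinearOrder α] (s : Finset α) (p : α → Prop)
    [DecidablePred p] :
    (s.sort (· ≤ ·)).countP (fun a => decide (p a)) = #(s.filter p) := by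
  have h1 : (s.sort (· ≤ ·)).countP (fun a => decide (p a))
      = s.toList.countP (fun a => decide (p a)) :=
    (Finset.sort_perm_toList (s := s) (r := (· ≤ ·))).countP_eq _
  rw [h1]
  have h2 : s.toList.countP (fun a => decide (p a)) = Multiset.countP p (↑s.toList) :=
    (Multiset.coe_countP p s.toList).symm
  rw [h2]
  rw [Finset.coe_toList]
  rw [Multiset.countP_eq_card_filter]
  rfl

/- ## The counting function -/

/-- The cyclic interval `[i,j]` as a finset. -/
def scon (i j : Fin n) : Finset (Fin n) :=
  univ.filter (fun a => a - i ≤ j - i)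

/-- `cnt S i j = |S ∩ [i,j]|`. -/
def cnt (S : Finset (Fin n)) (i j : Fin n) : ℕ := #(S ∩ scon i j)

lemma inter_scon_eq_filter (S : Finset (Fin n)) (i j : Fin n) :
    S ∩ scon i j = S.filter (fun a => a - i ≤ j - i) := by
  ext a; simp [scon, Finset.mem_filter, Finset.mem_inter]

lemma galeLE_iff [NeZero n] (i : Fin n) (S T : Finset (Fin n)) (hc : S.card = T.card) :
    galeLE i S T ↔ ∀ j : Fin n, cnt T i j ≤ cnt S i j := by
  classical
  have hinj : Function.Injective (fun a : Fin n => a - i) := by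
    intro a b hab
    simpa using sub_left_injective (G := Fin n) (b := i) hab
  constructor
  · intro h j
    have := countP_le_of_forall₂ h (j - i)
    rw [countP_sort_eq, countP_sort_eq] at this
    simp only [Finset.filter_image] at this
    rw [Finset.card_image_of_injective _ hinj, Finset.card_image_of_injective _ hinj] at this
    simpa [cnt, inter_scon_eq_filter] using this
  · intro h
    apply forall₂_of_countP
    · exact Finset.pairwise_sort ..
    · exact Finset.pairwise_sort ..
    · rw [Finset.length_sort, Finset.length_sort,
        Finset.card_image_of_injective _ hinj, Finset.card_image_of_injective _ hinj, hc]
    · intro t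
      have := h (t + i)
      simp only [cnt, inter_scon_eq_filter, add_sub_cancel_right] at this
      rw [countP_sort_eq, countP_sort_eq]
      simp only [Finset.filter_image]
      rw [Finset.card_image_of_injective _ hinj, Finset.card_image_of_injective _ hinj]
      exact this


/- ## Characterization of B(J) by interval counts -/

lemma mem_necklaceBases_iff [NeZero n] {k : ℕ} {J : Fin n → Finset (Fin n)}
    (hJ : IsGrassmannNecklace n k J) (B : Finset (Fin n)) :
    B ∈ necklaceBases n k J ↔ B.card = k ∧ ∀ i j : Fin n, cnt B i j ≤ cnt (J i) i j := by
  classical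
  rw [necklaceBases, Finset.mem_filter, Finset.mem_powersetCard]
  constructor
  · rintro ⟨⟨-, hcard⟩, hg⟩
    refine ⟨hcard, fun i j => ?_⟩
    exact (galeLE_iff i (J i) B ((hJ.1 i).trans hcard.symm)).mp (hg i) j
  · rintro ⟨hcard, hcnt⟩
    refine ⟨⟨Finset.subset_univ _, hcard⟩, fun i => ?_⟩
    exact (galeLE_iff i (J i) B ((hJ.1 i).trans hcard.symm)).mpr (hcnt i)

/- ## Necklace walk monotonicity -/

lemma necklace_erase_subset [NeZero n] {k : ℕ} {J : Fin n → Finset (Fin n)}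
    (hJ : IsGrassmannNecklace n k J) (s : Fin n) : (J s).erase s ⊆ J (s + 1) := by
  by_cases hs : s ∈ J s
  · obtain ⟨j, hj⟩ := (hJ.2 s).1 hs
    rw [hj]
    exact Finset.subset_insert _ _
  · rw [(hJ.2 s).2 hs]
    exact Finset.erase_subset _ _

lemma walk_mono [NeZero n] {k : ℕ} {J : Fin n → Finset (Fin n)}
    (hJ : IsGrassmannNecklace n k J) (I : Finset (Fin n)) (p : Fin n) (d : ℕ)
    (h : ∀ e : ℕ, e < d → p + (e : Fin n) ∉ I) :
    #(J p ∩ I) ≤ #(J (p + (d : Fin n)) ∩ I) := by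
  induction d with
  | zero => simp
  | succ d ih =>
      have h1 : #(J p ∩ I) ≤ #(J (p + (d : Fin n)) ∩ I) :=
        ih (fun e he => h e (by omega))
      refine le_trans h1 (Finset.card_le_card ?_)
      intro a ha
      rw [Finset.mem_inter] at ha ⊢
      have hsd : p + (d : Fin n) ∉ I := h d (by omega)
      have hane : a ≠ p + (d : Fin n) := by
        rintro rfl; exact hsd ha.2
      have : a ∈ (J (p + (d : Fin n))).erase (p + (d : Fin n)) :=
        Finset.mem_erase.mpr ⟨hane, ha.1⟩
      have := necklace_erase_subset hJ (p + (d : Fin n)) this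
      refine ⟨?_, ha.2⟩
      have hcast : ((d + 1 : ℕ) : Fin n) = (d : Fin n) + 1 := by push_cast; ring
      rw [hcast, ← add_assoc]
      exact this

/- ## Fin subtraction value -/

lemma sub_val [NeZero n] (u v : Fin n) :
    (u - v).val = if v.val ≤ u.val then u.val - v.val else u.val + n - v.val := by
  rw [Fin.sub_def]
  have hu := u.isLt
  have hv := v.isLt
  simp only []
  split_ifs with h
  · have : n - v.val + u.val = (u.val - v.val) + n := by omega
    rw [this, Nat.add_mod_right, Nat.mod_eq_of_lt (by omega)]
  · rw [Nat.mod_eq_of_lt (by omega)]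
    omega

/- ## Coordinates relative to a fixed element x -/

/-- Position of `a` in the linear order starting at `x+1`. -/
def psi [NeZero n] (x a : Fin n) : ℕ := (a - (x + 1)).val

/-- Inverse of `psi`. -/
def sig [NeZero n] (x : Fin n) (p : ℕ) : Fin n := x + 1 + (p : Fin n)

/-- The interval `{a : p ≤ psi x a ≤ q}`. -/
def Iv [NeZero n] (x : Fin n) (p q : ℕ) : Finset (Fin n) :=
  univ.filter (fun a => p ≤ psi x a ∧ psi x a ≤ q)

lemma psi_lt [NeZero n] (x a : Fin n) : psi x a < n := (a - (x + 1)).isLt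

lemma sig_psi [NeZero n] (x a : Fin n) : sig x (psi x a) = a := by
  rw [sig, psi, Fin.cast_val_eq_self]
  ring

lemma psi_sig [NeZero n] (x : Fin n) {p : ℕ} (hp : p < n) : psi x (sig x p) = p := by
  rw [sig, psi, add_sub_cancel_left, Fin.val_cast_of_lt hp]

lemma psi_x [NeZero n] (x : Fin n) : psi x x = n - 1 := by
  rw [psi]
  have h1 : x - (x + 1) = 0 - 1 := by ring
  rw [h1, sub_val]
  have h2 : (0 : Fin n).val = 0 := rfl
  have h3 : (1 : Fin n).val = 1 % n := Fin.val_one' n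
  have hn := Nat.pos_of_ne_zero (NeZero.ne n)
  rcases Nat.lt_or_ge 1 n with h | h
  · rw [h2, h3]
    rw [Nat.mod_eq_of_lt h]
    simp
  · interval_cases n
    simp [h2, h3]

lemma psi_eq_iff [NeZero n] (x a b : Fin n) : psi x a = psi x b ↔ a = b := by
  constructor
  · intro h
    have := congrArg (sig x) h
    rwa [sig_psi, sig_psi] at this
  · rintro rfl; rfl

lemma psi_le_of_ne [NeZero n] {x a : Fin n} (h : a ≠ x) : psi x a ≤ n - 2 := by
  have h1 := psi_lt x a
  have h2 : psi x a ≠ n - 1 := by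
    intro hc
    have := psi_x x
    rw [← this] at hc
    exact h ((psi_eq_iff x a x).mp hc)
  omega

/- ## Translation between scon and Iv -/

lemma sub_psi [NeZero n] (x a i : Fin n) :
    (a - i).val = if psi x i ≤ psi x a then psi x a - psi x i
      else psi x a + n - psi x i := by
  have h : a - i = (a - (x + 1)) - (i - (x + 1)) := (sub_sub_sub_cancel_right _ _ _).symm
  rw [h, sub_val]
  rfl

lemma mem_scon {i j a : Fin n} : a ∈ scon i j ↔ (a - i).val ≤ (j - i).val := by
  rw [scon, Finset.mem_filter]
  simp only [Finset.mem_univ, true_and]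
  exact Fin.le_def

lemma mem_Iv [NeZero n] {x a : Fin n} {p q : ℕ} :
    a ∈ Iv x p q ↔ p ≤ psi x a ∧ psi x a ≤ q := by
  simp [Iv]

lemma Iv_eq_scon [NeZero n] (x : Fin n) {p q : ℕ} (hpq : p ≤ q) (hq : q ≤ n - 2) :
    Iv x p q = scon (sig x p) (sig x q) := by
  have hn := Nat.pos_of_ne_zero (NeZero.ne n)
  ext a
  rw [mem_Iv, mem_scon, sub_psi x, sub_psi x, psi_sig x (show p < n by omega),
    psi_sig x (show q < n by omega)]
  have ha := psi_lt x a
  split_ifs <;> omega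

lemma psi_add_cast [NeZero n] (x : Fin n) {p : ℕ} (hp : p < n) :
    psi x (x + (p : Fin n)) = if p = 0 then n - 1 else p - 1 := by
  have hn := Nat.pos_of_ne_zero (NeZero.ne n)
  have h1 : x + (p : Fin n) - (x + 1) = (p : Fin n) - 1 := by ring
  rw [psi, h1, sub_val, Fin.val_cast_of_lt hp, Fin.val_one' n]
  rcases Nat.lt_or_ge 1 n with h | h
  · rw [Nat.mod_eq_of_lt h]
    split_ifs <;> omega
  · have hn1 : n = 1 := by omega
    subst hn1
    have hp0 : p = 0 := by omega
    subst hp0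
    simp

lemma Sv_eq_scon [NeZero n] (hn2 : 2 ≤ n) (x : Fin n) {p q : ℕ} (hpq : p ≤ q) (hq : q ≤ n - 2) :
    univ \ Iv x p q = scon (sig x (q + 1)) (x + (p : Fin n)) := by
  have hn := Nat.pos_of_ne_zero (NeZero.ne n)
  ext a
  rw [Finset.mem_sdiff, mem_Iv, mem_scon, sub_psi x, sub_psi x,
    psi_sig x (show q + 1 < n by omega), psi_add_cast x (show p < n by omega)]
  have ha := psi_lt x a
  simp only [Finset.mem_univ, true_and]
  split_ifs <;> omega

lemma scon_avoid [NeZero n] {x i j : Fin n} (hx : x ∉ scon i j) :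
    psi x i ≤ psi x j ∧ psi x j ≤ n - 2 ∧ scon i j = Iv x (psi x i) (psi x j) := by
  have hn := Nat.pos_of_ne_zero (NeZero.ne n)
  rw [mem_scon, sub_psi x, sub_psi x, psi_x] at hx
  push_neg at hx
  have hi := psi_lt x i
  have hj := psi_lt x j
  rw [if_pos (show psi x i ≤ n - 1 by omega)] at hx
  have hij : psi x i ≤ psi x j := by
    by_contra hc
    rw [if_neg (by omega)] at hx
    omega
  rw [if_pos hij] at hx
  refine ⟨hij, by omega, ?_⟩
  ext a
  rw [mem_scon, mem_Iv, sub_psi x, sub_psi x, if_pos hij]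
  have ha := psi_lt x a
  split_ifs <;> omega

lemma scon_contain [NeZero n] {x i j y : Fin n} (hx : x ∈ scon i j) (hy : y ∉ scon i j) :
    ∃ p q : ℕ, p ≤ q ∧ q ≤ n - 2 ∧ i = sig x (q + 1) ∧ j = x + (p : Fin n) ∧
      univ \ scon i j = Iv x p q := by
  have hn := Nat.pos_of_ne_zero (NeZero.ne n)
  have hi := psi_lt x i
  have hj := psi_lt x j
  have hyv := psi_lt x y
  rw [mem_scon, sub_psi x, sub_psi x, psi_x, if_pos (show psi x i ≤ n - 1 by omega)] at hx
  rw [mem_scon, sub_psi x, sub_psi x] at hy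
  push_neg at hy
  rcases le_or_gt (psi x i) (psi x j) with hij | hij
  · -- then psi x j = n - 1, i.e. j = x
    rw [if_pos hij] at hx hy
    have hjx : psi x j = n - 1 := by omega
    have hjx' : j = x := by
      have : psi x j = psi x x := by rw [psi_x]; omega
      exact (psi_eq_iff x j x).mp this
    have hi1 : 1 ≤ psi x i := by
      by_contra hc
      rcases le_or_gt (psi x i) (psi x y) with h' | h'
      · rw [if_pos h'] at hy; omega
      · omega
    refine ⟨0, psi x i - 1, by omega, by omega, ?_, ?_, ?_⟩
    · have : psi x i - 1 + 1 = psi x i := by omega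
      rw [this, sig_psi]
    · simp [hjx']
    · ext a
      rw [Finset.mem_sdiff, mem_scon, mem_Iv, sub_psi x, sub_psi x]
      have ha := psi_lt x a
      simp only [Finset.mem_univ, true_and]
      split_ifs <;> omega
  · -- wrap-around case
    rw [if_neg (by omega)] at hy
    have hky : psi x j < psi x y ∧ psi x y < psi x i := by
      rcases le_or_gt (psi x i) (psi x y) with h' | h'
      · rw [if_pos h'] at hy; omega
      · rw [if_neg (by omega)] at hy
        constructor <;> omega
    refine ⟨psi x j + 1, psi x i - 1, by omega, by omega, ?_, ?_, ?_⟩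
    · have : psi x i - 1 + 1 = psi x i := by omega
      rw [this, sig_psi]
    · have hcast : ((psi x j + 1 : ℕ) : Fin n) = (psi x j : Fin n) + 1 := by push_cast; ring
      rw [hcast]
      have : x + ((psi x j : Fin n) + 1) = sig x (psi x j) := by rw [sig]; ring
      rw [this, sig_psi]
    · ext a
      rw [Finset.mem_sdiff, mem_scon, mem_Iv, sub_psi x, sub_psi x]
      have ha := psi_lt x a
      simp only [Finset.mem_univ, true_and]
      split_ifs <;> omega

/- ## Constraint functions and submodularity -/

/-- Upper bound for `|B ∩ Iv x p q|`. -/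
def Cc [NeZero n] (J : Fin n → Finset (Fin n)) (x : Fin n) (p q : ℕ) : ℕ :=
  #(J (sig x p) ∩ Iv x p q)

/-- Complementary bound: `|B ∩ Iv x p q| ≥ k - Co`. -/
def Co [NeZero n] (J : Fin n → Finset (Fin n)) (x : Fin n) (p q : ℕ) : ℕ :=
  #(J (sig x (q + 1)) ∩ (univ \ Iv x p q))

lemma constraint_C [NeZero n] {k : ℕ} {J : Fin n → Finset (Fin n)}
    (hJ : IsGrassmannNecklace n k J) {B : Finset (Fin n)} (hB : B ∈ necklaceBases n k J)
    (x : Fin n) {p q : ℕ} (hpq : p ≤ q) (hq : q ≤ n - 2) :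
    #(B ∩ Iv x p q) ≤ Cc J x p q := by
  have h := ((mem_necklaceBases_iff hJ B).mp hB).2 (sig x p) (sig x q)
  rw [cnt, cnt, ← Iv_eq_scon x hpq hq] at h
  exact h

lemma constraint_Co [NeZero n] (hn2 : 2 ≤ n) {k : ℕ} {J : Fin n → Finset (Fin n)}
    (hJ : IsGrassmannNecklace n k J) {B : Finset (Fin n)} (hB : B ∈ necklaceBases n k J)
    (x : Fin n) {p q : ℕ} (hpq : p ≤ q) (hq : q ≤ n - 2) :
    k ≤ #(B ∩ Iv x p q) + Co J x p q := by
  have h := ((mem_necklaceBases_iff hJ B).mp hB).2 (sig x (q + 1)) (x + (p : Fin n))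
  rw [cnt, cnt, ← Sv_eq_scon hn2 x hpq hq] at h
  have hsplit : #(B ∩ Iv x p q) + #(B ∩ (univ \ Iv x p q)) = #B := by
    have h1 : B ∩ (univ \ Iv x p q) = B \ Iv x p q := by
      ext a; simp [Finset.mem_sdiff, Finset.mem_inter]
    rw [h1]
    exact Finset.card_inter_add_card_sdiff B (Iv x p q)
  have hcard : #B = k := ((mem_necklaceBases_iff hJ B).mp hB).1
  rw [Co]
  omega

lemma Iv_card_split [NeZero n] (x : Fin n) (S : Finset (Fin n)) {p q q' : ℕ}
    (h1 : p ≤ q) (h2 : q < q') :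
    #(S ∩ Iv x p q') = #(S ∩ Iv x p q) + #(S ∩ Iv x (q + 1) q') := by
  have hu : Iv x p q' = Iv x p q ∪ Iv x (q + 1) q' := by
    ext a; rw [mem_Iv, Finset.mem_union, mem_Iv, mem_Iv]; omega
  have hd : Disjoint (S ∩ Iv x p q) (S ∩ Iv x (q + 1) q') := by
    rw [Finset.disjoint_left]
    intro a ha hb
    rw [Finset.mem_inter, mem_Iv] at ha hb
    omega
  rw [hu, Finset.inter_union_distrib_left, Finset.card_union_of_disjoint hd]

lemma sig_add_cast [NeZero n] (x : Fin n) (p e : ℕ) :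
    sig x p + (e : Fin n) = sig x (p + e) := by
  rw [sig, sig, Nat.cast_add]
  ring

lemma walk_mono' [NeZero n] {k : ℕ} {J : Fin n → Finset (Fin n)}
    (hJ : IsGrassmannNecklace n k J) (x : Fin n) (I : Finset (Fin n)) {r r' : ℕ}
    (hrr' : r ≤ r') (havoid : ∀ e : ℕ, r ≤ e → e < r' → sig x e ∉ I) :
    #(J (sig x r) ∩ I) ≤ #(J (sig x r') ∩ I) := by
  have h1 : sig x r' = sig x r + ((r' - r : ℕ) : Fin n) := by
    rw [sig_add_cast]
    congr 1
    omega
  rw [h1]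
  apply walk_mono hJ
  intro e he
  rw [sig_add_cast]
  exact havoid (r + e) (by omega) (by omega)

lemma submod_C [NeZero n] {k : ℕ} {J : Fin n → Finset (Fin n)}
    (hJ : IsGrassmannNecklace n k J) (x : Fin n) {p p' q q' : ℕ}
    (hpp' : p ≤ p') (hp'q : p' ≤ q) (hqq' : q ≤ q') (hq' : q' ≤ n - 2) :
    Cc J x p q' + Cc J x p' q ≤ Cc J x p q + Cc J x p' q' := by
  have hn := Nat.pos_of_ne_zero (NeZero.ne n)
  rcases eq_or_lt_of_le hqq' with rfl | hlt
  · omega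
  · have e1 : Cc J x p q' = Cc J x p q + #(J (sig x p) ∩ Iv x (q + 1) q') :=
      Iv_card_split x _ (le_trans hpp' hp'q) hlt
    have e2 : Cc J x p' q' = Cc J x p' q + #(J (sig x p') ∩ Iv x (q + 1) q') :=
      Iv_card_split x _ hp'q hlt
    have hD : #(J (sig x p) ∩ Iv x (q + 1) q') ≤ #(J (sig x p') ∩ Iv x (q + 1) q') := by
      apply walk_mono' hJ x _ hpp'
      intro e he1 he2
      rw [mem_Iv, psi_sig x (show e < n by omega)]
      omega
    omega

lemma compl_Iv_card [NeZero n] (x : Fin n) (S : Finset (Fin n)) {p q : ℕ} (hpq : p ≤ q) :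
    #(S ∩ (univ \ Iv x p q)) =
      #(S.filter (fun a => psi x a < p)) + #(S.filter (fun a => q < psi x a)) := by
  have hu : S ∩ (univ \ Iv x p q)
      = S.filter (fun a => psi x a < p) ∪ S.filter (fun a => q < psi x a) := by
    ext a
    rw [Finset.mem_inter, Finset.mem_sdiff, mem_Iv, Finset.mem_union, Finset.mem_filter,
      Finset.mem_filter]
    constructor
    · rintro ⟨ha, -, h⟩
      rcases Nat.lt_or_ge (psi x a) p with h' | h'
      · exact Or.inl ⟨ha, h'⟩
      · exact Or.inr ⟨ha, by omega⟩
    · rintro (⟨ha, h⟩ | ⟨ha, h⟩) <;> exact ⟨ha, Finset.mem_univ _, by omega⟩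
  have hd : Disjoint (S.filter (fun a => psi x a < p)) (S.filter (fun a => q < psi x a)) := by
    rw [Finset.disjoint_left]
    intro a ha hb
    rw [Finset.mem_filter] at ha hb
    omega
  rw [hu, Finset.card_union_of_disjoint hd]

lemma lo_card_split [NeZero n] (x : Fin n) (S : Finset (Fin n)) {p p' : ℕ} (h : p < p') :
    #(S.filter (fun a => psi x a < p')) =
      #(S.filter (fun a => psi x a < p)) + #(S ∩ Iv x p (p' - 1)) := by
  have hu : S.filter (fun a => psi x a < p')
      = S.filter (fun a => psi x a < p) ∪ (S ∩ Iv x p (p' - 1)) := by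
    ext a
    rw [Finset.mem_filter, Finset.mem_union, Finset.mem_filter, Finset.mem_inter, mem_Iv]
    constructor
    · rintro ⟨ha, hlt⟩
      rcases Nat.lt_or_ge (psi x a) p with h' | h'
      · exact Or.inl ⟨ha, h'⟩
      · exact Or.inr ⟨ha, h', by omega⟩
    · rintro (⟨ha, h'⟩ | ⟨ha, h1, h2⟩)
      · exact ⟨ha, by omega⟩
      · refine ⟨ha, by omega⟩
  have hd : Disjoint (S.filter (fun a => psi x a < p)) (S ∩ Iv x p (p' - 1)) := by
    rw [Finset.disjoint_left]
    intro a ha hb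
    rw [Finset.mem_filter] at ha
    rw [Finset.mem_inter, mem_Iv] at hb
    omega
  rw [hu, Finset.card_union_of_disjoint hd]

lemma supermod_Co [NeZero n] {k : ℕ} {J : Fin n → Finset (Fin n)}
    (hJ : IsGrassmannNecklace n k J) (x : Fin n) {p p' q q' : ℕ}
    (hpp' : p ≤ p') (hp'q : p' ≤ q) (hqq' : q ≤ q') (hq' : q' ≤ n - 2) :
    Co J x p q' + Co J x p' q ≤ Co J x p q + Co J x p' q' := by
  have hn := Nat.pos_of_ne_zero (NeZero.ne n)
  rcases eq_or_lt_of_le hpp' with rfl | hplt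
  · omega
  · have hpq : p ≤ q := le_trans hpp' hp'q
    have hpq' : p ≤ q' := le_trans hpq hqq'
    have hp'q' : p' ≤ q' := le_trans hp'q hqq'
    rw [Co, Co, Co, Co, compl_Iv_card x _ hpq, compl_Iv_card x _ hpq',
      compl_Iv_card x _ hp'q, compl_Iv_card x _ hp'q']
    have e1 := lo_card_split x (J (sig x (q + 1))) hplt
    have e2 := lo_card_split x (J (sig x (q' + 1))) hplt
    have hE : #(J (sig x (q + 1)) ∩ Iv x p (p' - 1))
        ≤ #(J (sig x (q' + 1)) ∩ Iv x p (p' - 1)) := by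
      apply walk_mono' hJ x _ (by omega : q + 1 ≤ q' + 1)
      intro e he1 he2
      rw [mem_Iv, psi_sig x (show e < n by omega)]
      omega
    omega

/- ## Merging tight intervals -/

lemma tight_union_C [NeZero n] {k : ℕ} {J : Fin n → Finset (Fin n)}
    (hJ : IsGrassmannNecklace n k J) {B : Finset (Fin n)} (hB : B ∈ necklaceBases n k J)
    (x : Fin n) {p p' q q' : ℕ} (hpp' : p ≤ p') (hpq : p ≤ q) (hp'q' : p' ≤ q')
    (hq : q ≤ n - 2) (hq' : q' ≤ n - 2) (hov : p' ≤ min q q')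
    (t1 : #(B ∩ Iv x p q) = Cc J x p q) (t2 : #(B ∩ Iv x p' q') = Cc J x p' q') :
    #(B ∩ Iv x p (max q q')) = Cc J x p (max q q') := by
  rcases le_total q' q with h | h
  · rw [max_eq_left h]; exact t1
  · rw [max_eq_right h]
    have hp'q : p' ≤ q := le_min_iff.mp hov |>.1
    have hincl : #(B ∩ Iv x p q') + #(B ∩ Iv x p' q)
        = #(B ∩ Iv x p q) + #(B ∩ Iv x p' q') := by
      have hu : (B ∩ Iv x p q) ∪ (B ∩ Iv x p' q') = B ∩ Iv x p q' := by
        ext a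
        rw [Finset.mem_union, Finset.mem_inter, Finset.mem_inter, Finset.mem_inter,
          mem_Iv, mem_Iv, mem_Iv]
        constructor
        · rintro (⟨ha, h1, h2⟩ | ⟨ha, h1, h2⟩) <;> exact ⟨ha, by omega, by omega⟩
        · rintro ⟨ha, h1, h2⟩
          rcases Nat.le_or_ge (psi x a) q with h' | h'
          · exact Or.inl ⟨ha, h1, h'⟩
          · exact Or.inr ⟨ha, by omega, h2⟩
      have hi : (B ∩ Iv x p q) ∩ (B ∩ Iv x p' q') = B ∩ Iv x p' q := by
        ext a
        rw [Finset.mem_inter, Finset.mem_inter, Finset.mem_inter, Finset.mem_inter,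
          mem_Iv, mem_Iv, mem_Iv]
        constructor
        · rintro ⟨⟨ha, h1, h2⟩, -, h3, h4⟩
          exact ⟨ha, h3, h2⟩
        · rintro ⟨ha, h1, h2⟩
          exact ⟨⟨ha, by omega, by omega⟩, ha, h1, by omega⟩
      have := Finset.card_union_add_card_inter (B ∩ Iv x p q) (B ∩ Iv x p' q')
      rw [hu, hi] at this
      omega
    have c1 := constraint_C hJ hB x (le_trans hpq (by omega) : p ≤ q') hq'
    have c2 := constraint_C hJ hB x hp'q hq
    have hsub := submod_C hJ x hpp' hp'q h hq'
    omega

lemma tight_union_Co [NeZero n] (hn2 : 2 ≤ n) {k : ℕ} {J : Fin n → Finset (Fin n)}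
    (hJ : IsGrassmannNecklace n k J) {B : Finset (Fin n)} (hB : B ∈ necklaceBases n k J)
    (x : Fin n) {p p' q q' : ℕ} (hpp' : p ≤ p') (hpq : p ≤ q) (hp'q' : p' ≤ q')
    (hq : q ≤ n - 2) (hq' : q' ≤ n - 2) (hov : p' ≤ min q q')
    (t1 : #(B ∩ Iv x p q) + Co J x p q = k) (t2 : #(B ∩ Iv x p' q') + Co J x p' q' = k) :
    #(B ∩ Iv x p (max q q')) + Co J x p (max q q') = k := by
  rcases le_total q' q with h | h
  · rw [max_eq_left h]; exact t1
  · rw [max_eq_right h]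
    have hp'q : p' ≤ q := le_min_iff.mp hov |>.1
    have hincl : #(B ∩ Iv x p q') + #(B ∩ Iv x p' q)
        = #(B ∩ Iv x p q) + #(B ∩ Iv x p' q') := by
      have hu : (B ∩ Iv x p q) ∪ (B ∩ Iv x p' q') = B ∩ Iv x p q' := by
        ext a
        rw [Finset.mem_union, Finset.mem_inter, Finset.mem_inter, Finset.mem_inter,
          mem_Iv, mem_Iv, mem_Iv]
        constructor
        · rintro (⟨ha, h1, h2⟩ | ⟨ha, h1, h2⟩) <;> exact ⟨ha, by omega, by omega⟩
        · rintro ⟨ha, h1, h2⟩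
          rcases Nat.le_or_ge (psi x a) q with h' | h'
          · exact Or.inl ⟨ha, h1, h'⟩
          · exact Or.inr ⟨ha, by omega, h2⟩
      have hi : (B ∩ Iv x p q) ∩ (B ∩ Iv x p' q') = B ∩ Iv x p' q := by
        ext a
        rw [Finset.mem_inter, Finset.mem_inter, Finset.mem_inter, Finset.mem_inter,
          mem_Iv, mem_Iv, mem_Iv]
        constructor
        · rintro ⟨⟨ha, h1, h2⟩, -, h3, h4⟩
          exact ⟨ha, h3, h2⟩
        · rintro ⟨ha, h1, h2⟩
          exact ⟨⟨ha, by omega, by omega⟩, ha, h1, by omega⟩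
      have := Finset.card_union_add_card_inter (B ∩ Iv x p q) (B ∩ Iv x p' q')
      rw [hu, hi] at this
      omega
    have c1 := constraint_Co hn2 hJ hB x (le_trans hpq (by omega) : p ≤ q') hq'
    have c2 := constraint_Co hn2 hJ hB x hp'q hq
    have hsub := supermod_Co hJ x hpp' hp'q h hq'
    omega

/- ## Exchange properties of B(J) -/

lemma card_inter_exchange {B S : Finset (Fin n)} {x y : Fin n} (hx : x ∈ B) (hy : y ∉ B) :
    #((insert y (B.erase x)) ∩ S) + (if x ∈ S then 1 else 0)
      = #(B ∩ S) + (if y ∈ S then 1 else 0) := by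
  classical
  by_cases hyS : y ∈ S
  · have h1 : (insert y (B.erase x)) ∩ S = insert y ((B ∩ S).erase x) := by
      ext a
      simp only [Finset.mem_inter, Finset.mem_insert, Finset.mem_erase]
      constructor
      · rintro ⟨(rfl | ⟨hax, haB⟩), haS⟩
        · exact Or.inl rfl
        · exact Or.inr ⟨hax, ⟨haB, haS⟩⟩
      · rintro (rfl | ⟨hax, haB, haS⟩)
        · exact ⟨Or.inl rfl, hyS⟩
        · exact ⟨Or.inr ⟨hax, haB⟩, haS⟩
    have hynotin : y ∉ (B ∩ S).erase x := by
      simp only [Finset.mem_erase, Finset.mem_inter]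
      rintro ⟨-, hyB, -⟩
      exact hy hyB
    rw [h1, if_pos hyS, Finset.card_insert_of_notMem hynotin]
    by_cases hxS : x ∈ S
    · have hmem : x ∈ B ∩ S := Finset.mem_inter.mpr ⟨hx, hxS⟩
      rw [if_pos hxS, Finset.card_erase_of_mem hmem]
      have : 0 < #(B ∩ S) := Finset.card_pos.mpr ⟨x, hmem⟩
      omega
    · rw [if_neg hxS, Finset.erase_eq_of_notMem (by simp [Finset.mem_inter, hxS])]
  · have h1 : (insert y (B.erase x)) ∩ S = (B ∩ S).erase x := by
      ext a
      simp only [Finset.mem_inter, Finset.mem_insert, Finset.mem_erase]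
      constructor
      · rintro ⟨(rfl | ⟨hax, haB⟩), haS⟩
        · exact absurd haS hyS
        · exact ⟨hax, ⟨haB, haS⟩⟩
      · rintro ⟨hax, haB, haS⟩
        exact ⟨Or.inr ⟨hax, haB⟩, haS⟩
    rw [h1, if_neg hyS]
    by_cases hxS : x ∈ S
    · have hmem : x ∈ B ∩ S := Finset.mem_inter.mpr ⟨hx, hxS⟩
      rw [if_pos hxS, Finset.card_erase_of_mem hmem]
      have : 0 < #(B ∩ S) := Finset.card_pos.mpr ⟨x, hmem⟩
      omega
    · rw [if_neg hxS, Finset.erase_eq_of_notMem (by simp [Finset.mem_inter, hxS])]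

lemma swap_card [NeZero n] {k : ℕ} {J : Fin n → Finset (Fin n)}
    (hJ : IsGrassmannNecklace n k J) {B : Finset (Fin n)} (hB : B ∈ necklaceBases n k J)
    {x y : Fin n} (hx : x ∈ B) (hy : y ∉ B) : #(insert y (B.erase x)) = k := by
  classical
  have hcard : #B = k := ((mem_necklaceBases_iff hJ B).mp hB).1
  have h0 : 0 < #B := Finset.card_pos.mpr ⟨x, hx⟩
  rw [Finset.card_insert_of_notMem (fun h => hy (Finset.mem_of_mem_erase h)),
    Finset.card_erase_of_mem hx]
  omega

lemma violation_tight [NeZero n] {k : ℕ} {J : Fin n → Finset (Fin n)}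
    (hJ : IsGrassmannNecklace n k J) {B : Finset (Fin n)} (hB : B ∈ necklaceBases n k J)
    {x y : Fin n} (hx : x ∈ B) (hy : y ∉ B) (hC : insert y (B.erase x) ∉ necklaceBases n k J) :
    ∃ i j : Fin n, y ∈ scon i j ∧ x ∉ scon i j ∧ #(B ∩ scon i j) = #(J i ∩ scon i j) := by
  classical
  rw [mem_necklaceBases_iff hJ] at hC
  push_neg at hC
  obtain ⟨i, j, hij⟩ := hC (swap_card hJ hB hx hy)
  refine ⟨i, j, ?_⟩
  have hviol : #(J i ∩ scon i j) < #((insert y (B.erase x)) ∩ scon i j) := hij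
  have hident := card_inter_exchange (S := scon i j) hx hy
  have hcons : #(B ∩ scon i j) ≤ #(J i ∩ scon i j) :=
    ((mem_necklaceBases_iff hJ B).mp hB).2 i j
  by_cases hyS : y ∈ scon i j <;> by_cases hxS : x ∈ scon i j <;>
    simp only [if_pos, if_neg, hyS, hxS, if_true, if_false] at hident <;>
    first
      | (exact ⟨hyS, hxS, by omega⟩)
      | omega

/-- The finset of maximal-length candidate tight pairs for `y` (E1 version). -/
def TPf [NeZero n] (J : Fin n → Finset (Fin n)) (B : Finset (Fin n)) (x y : Fin n) :
    Finset (ℕ × ℕ) := by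
  classical
  exact ((Finset.range n) ×ˢ (Finset.range n)).filter
    (fun pq => pq.1 ≤ psi x y ∧ psi x y ≤ pq.2 ∧ pq.2 ≤ n - 2 ∧
      #(B ∩ Iv x pq.1 pq.2) = Cc J x pq.1 pq.2)

lemma mem_TPf [NeZero n] {J : Fin n → Finset (Fin n)} {B : Finset (Fin n)} {x y : Fin n}
    {pq : ℕ × ℕ} :
    pq ∈ TPf J B x y ↔ pq.1 ≤ psi x y ∧ psi x y ≤ pq.2 ∧ pq.2 ≤ n - 2 ∧
      #(B ∩ Iv x pq.1 pq.2) = Cc J x pq.1 pq.2 := by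
  classical
  have hn := Nat.pos_of_ne_zero (NeZero.ne n)
  have hy := psi_lt x y
  rw [TPf]
  simp only [Finset.mem_filter, Finset.mem_product, Finset.mem_range]
  constructor
  · rintro ⟨-, h⟩; exact h
  · rintro ⟨h1, h2, h3, h4⟩
    exact ⟨⟨by omega, by omega⟩, h1, h2, h3, h4⟩

lemma TPf_pairs_eq_of_le [NeZero n] {k : ℕ} {J : Fin n → Finset (Fin n)}
    (hJ : IsGrassmannNecklace n k J) {B : Finset (Fin n)} (hB : B ∈ necklaceBases n k J)
    (x : Fin n) {y y' : Fin n} {pq pq' : ℕ × ℕ}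
    (h1 : pq ∈ TPf J B x y) (hmax1 : ∀ r ∈ TPf J B x y, r.2 - r.1 ≤ pq.2 - pq.1)
    (h2 : pq' ∈ TPf J B x y') (hmax2 : ∀ r ∈ TPf J B x y', r.2 - r.1 ≤ pq'.2 - pq'.1)
    {a : Fin n} (ha : a ∈ Iv x pq.1 pq.2) (ha' : a ∈ Iv x pq'.1 pq'.2)
    (hle : pq.1 ≤ pq'.1) : pq = pq' := by
  obtain ⟨hy1, hy2, hq, ht⟩ := mem_TPf.mp h1
  obtain ⟨hy1', hy2', hq', ht'⟩ := mem_TPf.mp h2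
  rw [mem_Iv] at ha ha'
  have hov : pq'.1 ≤ min pq.2 pq'.2 := by omega
  have htu := tight_union_C hJ hB x hle (by omega) (by omega) hq hq' hov ht ht'
  have hmem : (pq.1, max pq.2 pq'.2) ∈ TPf J B x y :=
    mem_TPf.mpr ⟨by omega, by simp; omega, by simp; omega, htu⟩
  have hmem' : (pq.1, max pq.2 pq'.2) ∈ TPf J B x y' :=
    mem_TPf.mpr ⟨by omega, by simp; omega, by simp; omega, htu⟩
  have hm1 := hmax1 _ hmem
  have hm2 := hmax2 _ hmem'
  simp only [max_def] at hm1 hm2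
  have : pq.1 = pq'.1 ∧ pq.2 = pq'.2 := by
    split_ifs at hm1 hm2 <;> omega
  exact Prod.ext this.1 this.2

lemma exchange_E1 [NeZero n] {k : ℕ} {J : Fin n → Finset (Fin n)}
    (hJ : IsGrassmannNecklace n k J) {B B' : Finset (Fin n)}
    (hB : B ∈ necklaceBases n k J) (hB' : B' ∈ necklaceBases n k J)
    {x : Fin n} (hxB : x ∈ B) (hxB' : x ∉ B') :
    ∃ y ∈ B' \ B, insert y (B.erase x) ∈ necklaceBases n k J := by
  classical
  by_contra hcon
  push_neg at hcon
  set D := B' \ B with hD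
  have hDne : D.Nonempty := by
    rw [hD, Finset.sdiff_nonempty]
    intro hsub
    have : B' = B := Finset.eq_of_subset_of_card_le hsub
      (le_of_eq (((mem_necklaceBases_iff hJ B).mp hB).1.trans
        (((mem_necklaceBases_iff hJ B').mp hB').1.symm)))
    exact hxB' (this ▸ hxB)
  -- every y in D admits a maximal tight pair
  have hTP : ∀ y ∈ D, ∃ pq ∈ TPf J B x y, ∀ r ∈ TPf J B x y, r.2 - r.1 ≤ pq.2 - pq.1 := by
    intro y hyD
    have hyB : y ∉ B := (Finset.mem_sdiff.mp hyD).2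
    have hyB' : y ∈ B' := (Finset.mem_sdiff.mp hyD).1
    obtain ⟨i, j, hyS, hxS, htight⟩ :=
      violation_tight hJ hB hxB hyB (hcon y (Finset.mem_sdiff.mpr ⟨hyB', hyB⟩))
    obtain ⟨hij, hjn, hSeq⟩ := scon_avoid hxS
    have hne : (TPf J B x y).Nonempty := by
      refine ⟨(psi x i, psi x j), mem_TPf.mpr ⟨?_, ?_, hjn, ?_⟩⟩
      · have := hSeq ▸ hyS
        exact (mem_Iv.mp this).1
      · have := hSeq ▸ hyS
        exact (mem_Iv.mp this).2
      · rw [Cc, sig_psi, ← hSeq]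
        exact htight
    obtain ⟨pq, hpq, hmax⟩ := Finset.exists_max_image (TPf J B x y) (fun r => r.2 - r.1) hne
    exact ⟨pq, hpq, hmax⟩
  choose! f hf1 hf2 using hTP
  set 𝒯 := D.image f with h𝒯
  set T := 𝒯.biUnion (fun pq => Iv x pq.1 pq.2) with hT
  have hmem𝒯 : ∀ pq ∈ 𝒯, ∃ y ∈ D, f y = pq ∧ pq ∈ TPf J B x y ∧
      ∀ r ∈ TPf J B x y, r.2 - r.1 ≤ pq.2 - pq.1 := by
    intro pq hpq
    obtain ⟨y, hyD, hfy⟩ := Finset.mem_image.mp hpq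
    exact ⟨y, hyD, hfy, hfy ▸ hf1 y hyD, hfy ▸ hf2 y hyD⟩
  have hdisj : ∀ pq ∈ 𝒯, ∀ pq' ∈ 𝒯, pq ≠ pq' →
      Disjoint (Iv x pq.1 pq.2) (Iv x pq'.1 pq'.2) := by
    intro pq hpq pq' hpq' hne
    by_contra hnd
    obtain ⟨a, ha, ha'⟩ := Finset.not_disjoint_iff.mp hnd
    obtain ⟨y, -, -, hm, hmx⟩ := hmem𝒯 pq hpq
    obtain ⟨y', -, -, hm', hmx'⟩ := hmem𝒯 pq' hpq'
    rcases le_total pq.1 pq'.1 with h | h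
    · exact hne (TPf_pairs_eq_of_le hJ hB x hm hmx hm' hmx' ha ha' h)
    · exact hne (TPf_pairs_eq_of_le hJ hB x hm' hmx' hm hmx ha' ha h).symm
  have hBT : #(B' ∩ T) ≤ #(B ∩ T) := by
    have hBT1 : B' ∩ T = 𝒯.biUnion (fun pq => B' ∩ Iv x pq.1 pq.2) := by
      ext a
      simp only [Finset.mem_inter, Finset.mem_biUnion, hT]
      tauto
    have hBT2 : B ∩ T = 𝒯.biUnion (fun pq => B ∩ Iv x pq.1 pq.2) := by
      ext a
      simp only [Finset.mem_inter, Finset.mem_biUnion, hT]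
      tauto
    rw [hBT1, hBT2, Finset.card_biUnion, Finset.card_biUnion]
    · apply Finset.sum_le_sum
      intro pq hpq
      obtain ⟨y, hyD, hfy, hm, -⟩ := hmem𝒯 pq hpq
      obtain ⟨hp1, hp2, hp3, ht⟩ := mem_TPf.mp hm
      calc #(B' ∩ Iv x pq.1 pq.2) ≤ Cc J x pq.1 pq.2 :=
            constraint_C hJ hB' x (by omega) hp3
        _ = #(B ∩ Iv x pq.1 pq.2) := ht.symm
    · intro u hu v hv huv
      exact Finset.disjoint_of_subset_left (Finset.inter_subset_right)
        (Finset.disjoint_of_subset_right (Finset.inter_subset_right) (hdisj u hu v hv huv))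
    · intro u hu v hv huv
      exact Finset.disjoint_of_subset_left (Finset.inter_subset_right)
        (Finset.disjoint_of_subset_right (Finset.inter_subset_right) (hdisj u hu v hv huv))
  have hxT : x ∉ T := by
    rw [hT]
    intro hmem
    obtain ⟨pq, hpq, hxIv⟩ := Finset.mem_biUnion.mp hmem
    obtain ⟨y, hyD, hfy, hm, -⟩ := hmem𝒯 pq hpq
    obtain ⟨hp1, hp2, hp3, -⟩ := mem_TPf.mp hm
    have hyx : y ≠ x := by
      rintro rfl
      exact (Finset.mem_sdiff.mp hyD).2 hxB
    have hn2 : 2 ≤ n := by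
      by_contra hc
      have h1 : psi x y < n := psi_lt x y
      have h2 : psi x x < n := psi_lt x x
      exact hyx ((psi_eq_iff x y x).mp (by omega))
    have := (mem_Iv.mp hxIv).2
    rw [psi_x] at this
    omega
  have hDT : D ⊆ T := by
    intro y hyD
    rw [hT]
    apply Finset.mem_biUnion.mpr
    refine ⟨f y, Finset.mem_image_of_mem f hyD, ?_⟩
    obtain ⟨hp1, hp2, -, -⟩ := mem_TPf.mp (hf1 y hyD)
    exact mem_Iv.mpr ⟨hp1, hp2⟩
  -- final count
  have hcB : #B = k := ((mem_necklaceBases_iff hJ B).mp hB).1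
  have hcB' : #B' = k := ((mem_necklaceBases_iff hJ B').mp hB').1
  have hsplitB := Finset.card_inter_add_card_sdiff B T
  have hsplitB' := Finset.card_inter_add_card_sdiff B' T
  have hxBT : x ∈ B \ T := Finset.mem_sdiff.mpr ⟨hxB, hxT⟩
  have hsub : B' \ T ⊆ (B \ T).erase x := by
    intro a ha
    rw [Finset.mem_sdiff] at ha
    rw [Finset.mem_erase, Finset.mem_sdiff]
    have haB : a ∈ B := by
      by_contra hc
      exact ha.2 (hDT (Finset.mem_sdiff.mpr ⟨ha.1, hc⟩))
    refine ⟨?_, haB, ha.2⟩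
    rintro rfl
    exact hxB' ha.1
  have hcard_sub := Finset.card_le_card hsub
  rw [Finset.card_erase_of_mem hxBT] at hcard_sub
  have h1 : 0 < #(B \ T) := Finset.card_pos.mpr ⟨x, hxBT⟩
  omega

/- ## The co-exchange property -/

/-- The finset of maximal-length candidate co-tight pairs for `y` (E2 version). -/
def TPc [NeZero n] (k : ℕ) (J : Fin n → Finset (Fin n)) (B : Finset (Fin n)) (x y : Fin n) :
    Finset (ℕ × ℕ) := by
  classical
  exact ((Finset.range n) ×ˢ (Finset.range n)).filter
    (fun pq => pq.1 ≤ psi x y ∧ psi x y ≤ pq.2 ∧ pq.2 ≤ n - 2 ∧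
      #(B ∩ Iv x pq.1 pq.2) + Co J x pq.1 pq.2 = k)

lemma mem_TPc [NeZero n] {k : ℕ} {J : Fin n → Finset (Fin n)} {B : Finset (Fin n)}
    {x y : Fin n} {pq : ℕ × ℕ} :
    pq ∈ TPc k J B x y ↔ pq.1 ≤ psi x y ∧ psi x y ≤ pq.2 ∧ pq.2 ≤ n - 2 ∧
      #(B ∩ Iv x pq.1 pq.2) + Co J x pq.1 pq.2 = k := by
  classical
  have hn := Nat.pos_of_ne_zero (NeZero.ne n)
  have hy := psi_lt x y
  rw [TPc]
  simp only [Finset.mem_filter, Finset.mem_product, Finset.mem_range]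
  constructor
  · rintro ⟨-, h⟩; exact h
  · rintro ⟨h1, h2, h3, h4⟩
    exact ⟨⟨by omega, by omega⟩, h1, h2, h3, h4⟩

lemma TPc_pairs_eq_of_le [NeZero n] (hn2 : 2 ≤ n) {k : ℕ} {J : Fin n → Finset (Fin n)}
    (hJ : IsGrassmannNecklace n k J) {B : Finset (Fin n)} (hB : B ∈ necklaceBases n k J)
    (x : Fin n) {y y' : Fin n} {pq pq' : ℕ × ℕ}
    (h1 : pq ∈ TPc k J B x y) (hmax1 : ∀ r ∈ TPc k J B x y, r.2 - r.1 ≤ pq.2 - pq.1)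
    (h2 : pq' ∈ TPc k J B x y') (hmax2 : ∀ r ∈ TPc k J B x y', r.2 - r.1 ≤ pq'.2 - pq'.1)
    {a : Fin n} (ha : a ∈ Iv x pq.1 pq.2) (ha' : a ∈ Iv x pq'.1 pq'.2)
    (hle : pq.1 ≤ pq'.1) : pq = pq' := by
  obtain ⟨hy1, hy2, hq, ht⟩ := mem_TPc.mp h1
  obtain ⟨hy1', hy2', hq', ht'⟩ := mem_TPc.mp h2
  rw [mem_Iv] at ha ha'
  have hov : pq'.1 ≤ min pq.2 pq'.2 := by omega
  have htu := tight_union_Co hn2 hJ hB x hle (by omega) (by omega) hq hq' hov ht ht'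
  have hmem : (pq.1, max pq.2 pq'.2) ∈ TPc k J B x y :=
    mem_TPc.mpr ⟨by omega, by simp; omega, by simp; omega, htu⟩
  have hmem' : (pq.1, max pq.2 pq'.2) ∈ TPc k J B x y' :=
    mem_TPc.mpr ⟨by omega, by simp; omega, by simp; omega, htu⟩
  have hm1 := hmax1 _ hmem
  have hm2 := hmax2 _ hmem'
  simp only [max_def] at hm1 hm2
  have : pq.1 = pq'.1 ∧ pq.2 = pq'.2 := by
    split_ifs at hm1 hm2 <;> omega
  exact Prod.ext this.1 this.2

lemma exchange_E2 [NeZero n] {k : ℕ} {J : Fin n → Finset (Fin n)}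
    (hJ : IsGrassmannNecklace n k J) {B B' : Finset (Fin n)}
    (hB : B ∈ necklaceBases n k J) (hB' : B' ∈ necklaceBases n k J)
    {x : Fin n} (hxB' : x ∈ B') (hxB : x ∉ B) :
    ∃ y ∈ B \ B', insert x (B.erase y) ∈ necklaceBases n k J := by
  classical
  by_contra hcon
  push_neg at hcon
  set D := B \ B' with hD
  have hDne : D.Nonempty := by
    rw [hD, Finset.sdiff_nonempty]
    intro hsub
    have : B = B' := Finset.eq_of_subset_of_card_le hsub
      (le_of_eq (((mem_necklaceBases_iff hJ B').mp hB').1.trans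
        (((mem_necklaceBases_iff hJ B).mp hB).1.symm)))
    exact hxB (this ▸ hxB')
  have hn2 : 2 ≤ n := by
    obtain ⟨y, hyD⟩ := hDne
    have hyx : y ≠ x := by
      rintro rfl
      exact hxB (Finset.mem_sdiff.mp hyD).1
    by_contra hc
    have h1 : psi x y < n := psi_lt x y
    have h2 : psi x x < n := psi_lt x x
    exact hyx ((psi_eq_iff x y x).mp (by omega))
  have hTP : ∀ y ∈ D, ∃ pq ∈ TPc k J B x y, ∀ r ∈ TPc k J B x y, r.2 - r.1 ≤ pq.2 - pq.1 := by
    intro y hyD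
    have hyB : y ∈ B := (Finset.mem_sdiff.mp hyD).1
    obtain ⟨i, j, hxS, hyS, htight⟩ := violation_tight hJ hB hyB hxB (hcon y hyD)
    obtain ⟨p, q, hpq, hqn, hieq, hjeq, hIv⟩ := scon_contain hxS hyS
    have hcompl : univ \ Iv x p q = scon i j := by
      rw [← hIv, Finset.sdiff_sdiff_self_left, Finset.univ_inter]
    have hCo : Co J x p q = #(J i ∩ scon i j) := by
      rw [Co, hcompl, ← hieq]
    have hyIv : y ∈ Iv x p q := by
      rw [← hIv, Finset.mem_sdiff]
      exact ⟨Finset.mem_univ y, hyS⟩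
    have hBIv : B ∩ Iv x p q = B \ scon i j := by
      rw [← hIv]
      ext a
      simp only [Finset.mem_inter, Finset.mem_sdiff, Finset.mem_univ, true_and]
    have hcB : #B = k := ((mem_necklaceBases_iff hJ B).mp hB).1
    have hct : #(B ∩ Iv x p q) + Co J x p q = k := by
      rw [hBIv, hCo, ← htight]
      have := Finset.card_inter_add_card_sdiff B (scon i j)
      omega
    have hne : (TPc k J B x y).Nonempty := by
      refine ⟨(p, q), mem_TPc.mpr ⟨(mem_Iv.mp hyIv).1, (mem_Iv.mp hyIv).2, hqn, hct⟩⟩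
    obtain ⟨pq, hpqm, hmax⟩ := Finset.exists_max_image (TPc k J B x y) (fun r => r.2 - r.1) hne
    exact ⟨pq, hpqm, hmax⟩
  choose! f hf1 hf2 using hTP
  set 𝒯 := D.image f with h𝒯
  set T := 𝒯.biUnion (fun pq => Iv x pq.1 pq.2) with hT
  have hmem𝒯 : ∀ pq ∈ 𝒯, ∃ y ∈ D, f y = pq ∧ pq ∈ TPc k J B x y ∧
      ∀ r ∈ TPc k J B x y, r.2 - r.1 ≤ pq.2 - pq.1 := by
    intro pq hpq
    obtain ⟨y, hyD, hfy⟩ := Finset.mem_image.mp hpq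
    exact ⟨y, hyD, hfy, hfy ▸ hf1 y hyD, hfy ▸ hf2 y hyD⟩
  have hdisj : ∀ pq ∈ 𝒯, ∀ pq' ∈ 𝒯, pq ≠ pq' →
      Disjoint (Iv x pq.1 pq.2) (Iv x pq'.1 pq'.2) := by
    intro pq hpq pq' hpq' hne
    by_contra hnd
    obtain ⟨a, ha, ha'⟩ := Finset.not_disjoint_iff.mp hnd
    obtain ⟨y, -, -, hm, hmx⟩ := hmem𝒯 pq hpq
    obtain ⟨y', -, -, hm', hmx'⟩ := hmem𝒯 pq' hpq'
    rcases le_total pq.1 pq'.1 with h | h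
    · exact hne (TPc_pairs_eq_of_le hn2 hJ hB x hm hmx hm' hmx' ha ha' h)
    · exact hne (TPc_pairs_eq_of_le hn2 hJ hB x hm' hmx' hm hmx ha' ha h).symm
  have hBT : #(B ∩ T) ≤ #(B' ∩ T) := by
    have hBT1 : B' ∩ T = 𝒯.biUnion (fun pq => B' ∩ Iv x pq.1 pq.2) := by
      ext a
      simp only [Finset.mem_inter, Finset.mem_biUnion, hT]
      tauto
    have hBT2 : B ∩ T = 𝒯.biUnion (fun pq => B ∩ Iv x pq.1 pq.2) := by
      ext a
      simp only [Finset.mem_inter, Finset.mem_biUnion, hT]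
      tauto
    rw [hBT1, hBT2, Finset.card_biUnion, Finset.card_biUnion]
    · apply Finset.sum_le_sum
      intro pq hpq
      obtain ⟨y, hyD, hfy, hm, -⟩ := hmem𝒯 pq hpq
      obtain ⟨hp1, hp2, hp3, ht⟩ := mem_TPc.mp hm
      have hc := constraint_Co hn2 hJ hB' x (by omega : pq.1 ≤ pq.2) hp3
      omega
    · intro u hu v hv huv
      exact Finset.disjoint_of_subset_left (Finset.inter_subset_right)
        (Finset.disjoint_of_subset_right (Finset.inter_subset_right) (hdisj u hu v hv huv))
    · intro u hu v hv huv
      exact Finset.disjoint_of_subset_left (Finset.inter_subset_right)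
        (Finset.disjoint_of_subset_right (Finset.inter_subset_right) (hdisj u hu v hv huv))
  have hxT : x ∉ T := by
    rw [hT]
    intro hmem
    obtain ⟨pq, hpq, hxIv⟩ := Finset.mem_biUnion.mp hmem
    obtain ⟨y, hyD, hfy, hm, -⟩ := hmem𝒯 pq hpq
    obtain ⟨hp1, hp2, hp3, -⟩ := mem_TPc.mp hm
    have := (mem_Iv.mp hxIv).2
    rw [psi_x] at this
    omega
  have hDT : D ⊆ T := by
    intro y hyD
    rw [hT]
    apply Finset.mem_biUnion.mpr
    refine ⟨f y, Finset.mem_image_of_mem f hyD, ?_⟩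
    obtain ⟨hp1, hp2, -, -⟩ := mem_TPc.mp (hf1 y hyD)
    exact mem_Iv.mpr ⟨hp1, hp2⟩
  have hcB : #B = k := ((mem_necklaceBases_iff hJ B).mp hB).1
  have hcB' : #B' = k := ((mem_necklaceBases_iff hJ B').mp hB').1
  have hsplitB := Finset.card_inter_add_card_sdiff B T
  have hsplitB' := Finset.card_inter_add_card_sdiff B' T
  have hxBT : x ∈ B' \ T := Finset.mem_sdiff.mpr ⟨hxB', hxT⟩
  have hsub : B \ T ⊆ (B' \ T).erase x := by
    intro a ha
    rw [Finset.mem_sdiff] at ha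
    rw [Finset.mem_erase, Finset.mem_sdiff]
    have haB' : a ∈ B' := by
      by_contra hc
      exact ha.2 (hDT (Finset.mem_sdiff.mpr ⟨ha.1, hc⟩))
    refine ⟨?_, haB', ha.2⟩
    rintro rfl
    exact hxB ha.1
  have hcard_sub := Finset.card_le_card hsub
  rw [Finset.card_erase_of_mem hxBT] at hcard_sub
  have h1 : 0 < #(B' \ T) := Finset.card_pos.mpr ⟨x, hxBT⟩
  omega

/- ## The exchange relation and transport -/

/-- `u` and `v` are exchangeable in some basis. -/
def exRel (n k : ℕ) (J : Fin n → Finset (Fin n)) : Fin n → Fin n → Prop := fun u v =>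
  ∃ B ∈ necklaceBases n k J, u ∈ B ∧ v ∉ B ∧ insert v (B.erase u) ∈ necklaceBases n k J

lemma transport [NeZero n] {k : ℕ} {J : Fin n → Finset (Fin n)}
    (hJ : IsGrassmannNecklace n k J) {A : Finset (Fin n)}
    (hA : ∀ u v : Fin n, exRel n k J u v → (u ∈ A ↔ v ∈ A))
    {B₁ : Finset (Fin n)} (hB₁ : B₁ ∈ necklaceBases n k J) :
    ∀ d : ℕ, ∀ B₂ ∈ necklaceBases n k J, #((B₁ ∩ A) \ B₂) = d →
      ∃ Bst ∈ necklaceBases n k J, Bst ∩ A = B₁ ∩ A ∧ Bst \ A = B₂ \ A := by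
  classical
  intro d
  induction d with
  | zero =>
      intro B₂ hB₂ hcard
      have hsub : B₁ ∩ A ⊆ B₂ :=
        Finset.sdiff_eq_empty_iff_subset.mp (Finset.card_eq_zero.mp hcard)
      refine ⟨B₂, hB₂, ?_, rfl⟩
      ext a
      rw [Finset.mem_inter, Finset.mem_inter]
      constructor
      · rintro ⟨haB₂, haA⟩
        refine ⟨?_, haA⟩
        by_contra haB₁
        obtain ⟨w, hw, hins⟩ := exchange_E1 hJ hB₂ hB₁ haB₂ haB₁
        have hwB₁ : w ∈ B₁ := (Finset.mem_sdiff.mp hw).1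
        have hwB₂ : w ∉ B₂ := (Finset.mem_sdiff.mp hw).2
        have hwA : w ∈ A := (hA a w ⟨B₂, hB₂, haB₂, hwB₂, hins⟩).mp haA
        exact hwB₂ (hsub (Finset.mem_inter.mpr ⟨hwB₁, hwA⟩))
      · rintro ⟨haB₁, haA⟩
        exact ⟨hsub (Finset.mem_inter.mpr ⟨haB₁, haA⟩), haA⟩
  | succ d ih =>
      intro B₂ hB₂ hcard
      have hne : ((B₁ ∩ A) \ B₂).Nonempty := by
        rw [← Finset.card_pos, hcard]; omega
      obtain ⟨z, hz⟩ := hne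
      rw [Finset.mem_sdiff, Finset.mem_inter] at hz
      obtain ⟨⟨hzB₁, hzA⟩, hzB₂⟩ := hz
      obtain ⟨w, hw, hins⟩ := exchange_E2 hJ hB₂ hB₁ hzB₁ hzB₂
      have hwB₂ : w ∈ B₂ := (Finset.mem_sdiff.mp hw).1
      have hwB₁ : w ∉ B₁ := (Finset.mem_sdiff.mp hw).2
      set B₂' := insert z (B₂.erase w) with hB₂'def
      have hwA : w ∈ A := (hA w z ⟨B₂, hB₂, hwB₂, hzB₂, hins⟩).mpr hzA
      have hdiff : (B₁ ∩ A) \ B₂' = ((B₁ ∩ A) \ B₂).erase z := by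
        ext a
        rw [Finset.mem_sdiff, Finset.mem_erase, Finset.mem_sdiff, hB₂'def,
          Finset.mem_insert, Finset.mem_erase, Finset.mem_inter]
        constructor
        · rintro ⟨⟨haB₁, haA⟩, hni⟩
          push_neg at hni
          refine ⟨hni.1, ⟨haB₁, haA⟩, ?_⟩
          intro haB₂
          have haw : a ≠ w := by rintro rfl; exact hwB₁ haB₁
          exact hni.2 haw haB₂
        · rintro ⟨haz, ⟨haB₁, haA⟩, haB₂⟩
          refine ⟨⟨haB₁, haA⟩, ?_⟩
          rintro (rfl | ⟨-, h⟩)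
          · exact haz rfl
          · exact haB₂ h
      have hzmem : z ∈ (B₁ ∩ A) \ B₂ := by
        rw [Finset.mem_sdiff, Finset.mem_inter]
        exact ⟨⟨hzB₁, hzA⟩, hzB₂⟩
      have hcard' : #((B₁ ∩ A) \ B₂') = d := by
        rw [hdiff, Finset.card_erase_of_mem hzmem, hcard]
        omega
      obtain ⟨Bst, hBst, h1, h2⟩ := ih B₂' hins hcard'
      refine ⟨Bst, hBst, h1, ?_⟩
      rw [h2]
      ext a
      rw [Finset.mem_sdiff, Finset.mem_sdiff, hB₂'def, Finset.mem_insert, Finset.mem_erase]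
      constructor
      · rintro ⟨(rfl | ⟨-, h⟩), haA⟩
        · exact absurd hzA haA
        · exact ⟨h, haA⟩
      · rintro ⟨haB₂, haA⟩
        have haw : a ≠ w := by rintro rfl; exact haA hwA
        exact ⟨Or.inr ⟨haw, haB₂⟩, haA⟩

lemma mixing [NeZero n] {k : ℕ} {J : Fin n → Finset (Fin n)}
    (hJ : IsGrassmannNecklace n k J) {A : Finset (Fin n)}
    (hA : ∀ u v : Fin n, exRel n k J u v → (u ∈ A ↔ v ∈ A)) :
    ∀ B₁ ∈ necklaceBases n k J, ∀ B₂ ∈ necklaceBases n k J,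
      (B₁ ∩ A) ∪ (B₂ \ A) ∈ necklaceBases n k J := by
  classical
  intro B₁ hB₁ B₂ hB₂
  obtain ⟨Bst, hBst, h1, h2⟩ := transport hJ hA hB₁ (#((B₁ ∩ A) \ B₂)) B₂ hB₂ rfl
  have : Bst = (B₁ ∩ A) ∪ (B₂ \ A) := by
    rw [← h1, ← h2]
    ext a
    rw [Finset.mem_union, Finset.mem_inter, Finset.mem_sdiff]
    by_cases haA : a ∈ A <;> simp [haA]
  rwa [← this]

lemma eqvGen_all [NeZero n] {k : ℕ} {J : Fin n → Finset (Fin n)}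
    (hJ : IsGrassmannNecklace n k J) (hconn : ConnectedBases (necklaceBases n k J)) :
    ∀ u v : Fin n, Relation.EqvGen (exRel n k J) u v := by
  classical
  by_contra hc
  push_neg at hc
  obtain ⟨u, v, huv⟩ := hc
  apply hconn
  refine ⟨univ.filter (fun a => Relation.EqvGen (exRel n k J) u a), ⟨u, ?_⟩, ⟨v, ?_⟩, ?_⟩
  · rw [Finset.mem_filter]
    exact ⟨Finset.mem_univ u, Relation.EqvGen.refl u⟩
  · rw [Finset.mem_compl, Finset.mem_filter]
    rintro ⟨-, h⟩
    exact huv h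
  · apply mixing hJ
    intro w z hwz
    rw [Finset.mem_filter, Finset.mem_filter]
    constructor
    · rintro ⟨-, h⟩
      exact ⟨Finset.mem_univ z, h.trans _ _ _ (Relation.EqvGen.rel w z hwz)⟩
    · rintro ⟨-, h⟩
      exact ⟨Finset.mem_univ w, h.trans _ _ _ ((Relation.EqvGen.rel w z hwz).symm _ _)⟩

/- ## Linear algebra: the coordinate-sum functional -/

/-- The coordinate-sum linear functional on `ℝ^n`. -/
def sumL (n : ℕ) : (Fin n → ℝ) →ₗ[ℝ] ℝ where
  toFun x := ∑ a, x a
  map_add' x y := by simp [Finset.sum_add_distrib]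
  map_smul' c x := by simp [Finset.mul_sum]

lemma sumL_indic (B : Finset (Fin n)) : sumL n (indic B) = (#B : ℝ) := by
  classical
  simp only [sumL, LinearMap.coe_mk, AddHom.coe_mk, indic]
  rw [Finset.sum_boole]
  congr 1
  rw [Finset.filter_mem_eq_inter, Finset.univ_inter]

lemma finrank_ker_sumL [NeZero n] : Module.finrank ℝ (LinearMap.ker (sumL n)) = n - 1 := by
  have hsurj : Function.Surjective (sumL n) := by
    intro c
    refine ⟨Pi.single 0 c, ?_⟩
    simp [sumL]
  have h1 := LinearMap.finrank_range_add_finrank_ker (sumL n)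
  rw [LinearMap.range_eq_top.mpr hsurj] at h1
  rw [finrank_top] at h1
  have h2 : Module.finrank ℝ (Fin n → ℝ) = n := by simp
  have h3 : Module.finrank ℝ ℝ = 1 := Module.finrank_self ℝ
  omega

lemma indic_sub_indic {B : Finset (Fin n)} {u v : Fin n} (hu : u ∈ B) (hv : v ∉ B) :
    indic B - indic (insert v (B.erase u)) = Pi.single u (1 : ℝ) - Pi.single v 1 := by
  classical
  have huv : u ≠ v := by rintro rfl; exact hv hu
  funext a
  simp only [Pi.sub_apply, indic, Pi.single_apply, Finset.mem_insert, Finset.mem_erase]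
  by_cases h1 : a = u
  · subst h1
    simp [hu, hv, huv, Ne.symm huv]
  · by_cases h2 : a = v
    · subst h2
      simp [hv, h1, Ne.symm h1]
    · by_cases h3 : a ∈ B <;> simp [h1, h2, h3]

/-- The set of vertices of `P_J`. -/
def vertSet (n k : ℕ) (J : Fin n → Finset (Fin n)) : Set (Fin n → ℝ) :=
  {x | ∃ B ∈ necklaceBases n k J, x = indic B}

lemma single_sub_mem_vectorSpan [NeZero n] {k : ℕ} {J : Fin n → Finset (Fin n)}
    (hJ : IsGrassmannNecklace n k J) (hconn : ConnectedBases (necklaceBases n k J))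
    (u v : Fin n) :
    (Pi.single u (1 : ℝ) - Pi.single v 1) ∈ vectorSpan ℝ (vertSet n k J) := by
  have h := eqvGen_all hJ hconn u v
  induction h with
  | rel a b hab =>
      obtain ⟨B, hB, haB, hbB, hins⟩ := hab
      have h1 : indic B ∈ vertSet n k J := ⟨B, hB, rfl⟩
      have h2 : indic (insert b (B.erase a)) ∈ vertSet n k J := ⟨_, hins, rfl⟩
      have := vsub_mem_vectorSpan ℝ h1 h2
      rw [vsub_eq_sub, indic_sub_indic haB hbB] at this
      exact this
  | refl a => simp
  | symm a b hab ih =>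
      have : (Pi.single b 1 - Pi.single a 1 : Fin n → ℝ)
          = -(Pi.single a (1:ℝ) - Pi.single b 1) := by abel
      rw [this]
      exact Submodule.neg_mem _ ih
  | trans a b c hab hbc ih1 ih2 =>
      have : (Pi.single a 1 - Pi.single c 1 : Fin n → ℝ)
          = (Pi.single a (1:ℝ) - Pi.single b 1) + (Pi.single b (1:ℝ) - Pi.single c 1) := by
        abel
      rw [this]
      exact Submodule.add_mem _ ih1 ih2

lemma ker_le_vectorSpan [NeZero n] {k : ℕ} {J : Fin n → Finset (Fin n)}
    (hJ : IsGrassmannNecklace n k J) (hconn : ConnectedBases (necklaceBases n k J)) :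
    LinearMap.ker (sumL n) ≤ vectorSpan ℝ (vertSet n k J) := by
  intro z hz
  have hz0 : ∑ a, z a = 0 := hz
  have hrep : z = ∑ a, z a • ((Pi.single a 1 - Pi.single (0 : Fin n) 1 : Fin n → ℝ)) := by
    have e1 : ∑ a, z a • ((Pi.single a 1 - Pi.single (0 : Fin n) 1 : Fin n → ℝ))
        = (∑ a, z a • (Pi.single a 1 : Fin n → ℝ))
          - (∑ a, z a • (Pi.single (0 : Fin n) 1 : Fin n → ℝ)) := by
      rw [← Finset.sum_sub_distrib]
      congr 1
      funext a
      rw [smul_sub]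
    have e2 : ∑ a, z a • (Pi.single a 1 : Fin n → ℝ) = z := by
      have : ∀ a : Fin n, z a • (Pi.single a 1 : Fin n → ℝ) = Pi.single a (z a) := by
        intro a
        rw [← Pi.single_smul]
        congr 1
        simp
      simp_rw [this]
      exact Finset.univ_sum_single z
    have e3 : ∑ a, z a • (Pi.single (0 : Fin n) 1 : Fin n → ℝ) = (0 : Fin n → ℝ) := by
      rw [← Finset.sum_smul, hz0, zero_smul]
    rw [e1, e2, e3, sub_zero]
  rw [hrep]
  exact Submodule.sum_mem _ (fun a _ =>
    Submodule.smul_mem _ _ (single_sub_mem_vectorSpan hJ hconn a 0))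

lemma vectorSpan_le_ker [NeZero n] {k : ℕ} {J : Fin n → Finset (Fin n)}
    (hJ : IsGrassmannNecklace n k J) :
    vectorSpan ℝ (vertSet n k J) ≤ LinearMap.ker (sumL n) := by
  rw [vectorSpan_def, Submodule.span_le]
  rintro z ⟨p, hp, q, hq, rfl⟩
  obtain ⟨B, hB, rfl⟩ := hp
  obtain ⟨C, hC, rfl⟩ := hq
  have hBcard : #B = k := ((mem_necklaceBases_iff hJ B).mp hB).1
  have hCcard : #C = k := ((mem_necklaceBases_iff hJ C).mp hC).1
  have hz : sumL n (indic B -ᵥ indic C) = 0 := by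
    rw [vsub_eq_sub, map_sub, sumL_indic, sumL_indic, hBcard, hCcard, sub_self]
  exact SetLike.mem_coe.mpr (LinearMap.mem_ker.mpr hz)
theorem connected_positroid_polytope_is_full_dimensional
    (n k : ℕ) [NeZero n] (hn : 2 ≤ n) (hk1 : 1 ≤ k) (hkn : k ≤ n - 1)
    (J : Fin n → Finset (Fin n)) (hJ : IsGrassmannNecklace n k J)
    (hconn : ConnectedBases (necklaceBases n k J)) :
    Module.finrank ℝ (affineSpan ℝ (PJ n k J)).direction = n - 1 := by
  classical
  have hPJ : PJ n k J = convexHull ℝ (vertSet n k J) := rfl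
  rw [hPJ, affineSpan_convexHull, direction_affineSpan]
  have hle := vectorSpan_le_ker (k := k) (J := J) hJ
  have hge := ker_le_vectorSpan (k := k) (J := J) hJ hconn
  have : vectorSpan ℝ (vertSet n k J) = LinearMap.ker (sumL n) := le_antisymm hle hge
  rw [this, finrank_ker_sumL]

end PositroidPaper
end
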